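/- arXiv:1605.09044 — 3 statements merged into one kernel-verified Lean document; each statement's English description precedes it below -/
import Mathlib

section
/- Let $h,q$ be coprime integers with $q > 1$. For $\Re(s) > 1$, $\log L(s, \psi_{h/q}) = \sum_{p} \sum_{k=1}^\infty \frac{e^{2\pi i h p^k/q}}{k\, p^{sk}} + T_{h,q}(s)$, where $T_{h,q}(s) := \sum_{p} \sum_{k=2}^\infty \frac{e^{2\pi i p h k/q} - e^{2\pi i p^k h/q}}{k\, p^{sk}}$; moreover, for any $\epsilon > 0$, $T_{h,q}(s)$ is holomorphic for $\Re(s) > \tfrac12 + \epsilon$ and satisfies $|T_{h,q}(s)| = O_\epsilon(1)$ there, with the implied constant independent of $q$ and depending at most on $\epsilon$. -/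
open Complex Finset Filter Asymptotics intervalIntegral
open scoped Real Topology Classical

noncomputable section

/-- The additive prime divisor function `A(n) = ∑_{p^α ∥ n} α p`. -/
def Apd (n : ℕ) : ℕ := n.factorization.sum fun p a => a * p

/-- The completely multiplicative function `ψ_{h/q}(n) = e^{2πi h A(n)/q}`. -/
def psiA (h : ℤ) (q : ℕ) (n : ℕ) : ℂ :=
  Complex.exp (2 * (Real.pi : ℂ) * Complex.I * (h : ℂ) * (Apd n : ℂ) / (q : ℂ))

/-- The summatory function `∑_{n ≤ x} ψ_{h/q}(n)`. -/
def Spsi (h : ℤ) (q : ℕ) (x : ℝ) : ℂ := ∑ n ∈ Finset.Icc 1 ⌊x⌋₊, psiA h q n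

/-- The Dirichlet series `L(s, ψ_{h/q})`. -/
def Lpsi (h : ℤ) (q : ℕ) (s : ℂ) : ℂ := ∑' n : ℕ, psiA h q n / (n : ℂ) ^ s

/-- the ratio μ(q)/φ(q) -/
def mphi (q : ℕ) : ℝ := (ArithmeticFunction.moebius q : ℝ) / (Nat.totient q : ℝ)

/-- Gauss sum τ(χ) = ∑_{ℓ mod q} χ(ℓ) e^{2πiℓ/q}. -/
def gaussS {q : ℕ} (χ : DirichletCharacter ℂ q) : ℂ :=
  ∑ l ∈ Finset.range q, χ (l : ZMod q) * Complex.exp (2 * (Real.pi : ℂ) * Complex.I * (l : ℂ) / (q : ℂ))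

/-- conjugate Dirichlet character -/
def conjChar {q : ℕ} (χ : DirichletCharacter ℂ q) : DirichletCharacter ℂ q :=
  χ.ringHomComp (starRingEnd ℂ)

/-- `T_{h,q}(s) = ∑_p ∑_{k ≥ 2} (e^{2πiphk/q} - e^{2πip^k h/q})/(k p^{sk})`. -/
def Thq (h : ℤ) (q : ℕ) (s : ℂ) : ℂ :=
  ∑' (p : Nat.Primes) (k : ℕ),
    (Complex.exp (2 * (Real.pi : ℂ) * Complex.I * ((p : ℕ) : ℂ) * (h : ℂ) * ((k : ℂ) + 2) / (q : ℂ))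
      - Complex.exp (2 * (Real.pi : ℂ) * Complex.I * (((p : ℕ) : ℂ) ^ (k + 2)) * (h : ℂ) / (q : ℂ)))
      / (((k : ℂ) + 2) * ((p : ℕ) : ℂ) ^ (s * ((k : ℂ) + 2)))

/-- `U_{h,q}(s)`. -/
def Uhq (h : ℤ) (q : ℕ) (s : ℂ) : ℂ :=
  -((mphi q : ℝ) : ℂ) * ∑ p ∈ q.primeFactors, ∑' k : ℕ,
      1 / (((k : ℂ) + 1) * (p : ℂ) ^ (s * ((k : ℂ) + 1)))
  + ∑ p ∈ q.primeFactors, ∑' k : ℕ,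
      Complex.exp (2 * (Real.pi : ℂ) * Complex.I * (h : ℂ) * ((p : ℂ) ^ (k + 1)) / (q : ℂ))
        / (((k : ℂ) + 1) * (p : ℂ) ^ (s * ((k : ℂ) + 1)))
  + Thq h q s

/-- log of a Dirichlet L-function as absolutely convergent prime-power sum, for Re(s) > 1. -/
def plogChar {q : ℕ} (χ : DirichletCharacter ℂ q) (s : ℂ) : ℂ :=
  ∑' (p : Nat.Primes) (k : ℕ),
    χ (((p : ℕ) : ZMod q)) ^ (k + 1) / (((k : ℂ) + 1) * ((p : ℕ) : ℂ) ^ (s * ((k : ℂ) + 1)))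

/-- log of the Riemann zeta function as prime-power sum, for Re(s) > 1. -/
def plogZeta (s : ℂ) : ℂ :=
  ∑' (p : Nat.Primes) (k : ℕ),
    1 / (((k : ℂ) + 1) * ((p : ℕ) : ℂ) ^ (s * ((k : ℂ) + 1)))

/-- log L(s, ψ_{h/q}) = ∑_p ∑_{k≥1} e^{2πiphk/q}/(k p^{sk}). -/
def plogPsi (h : ℤ) (q : ℕ) (s : ℂ) : ℂ :=
  ∑' (p : Nat.Primes) (k : ℕ),
    Complex.exp (2 * (Real.pi : ℂ) * Complex.I * ((p : ℕ) : ℂ) * (h : ℂ) * ((k : ℂ) + 1) / (q : ℂ))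
      / (((k : ℂ) + 1) * ((p : ℕ) : ℂ) ^ (s * ((k : ℂ) + 1)))

/-- the sum ∑_p ∑_{k≥1} e^{2πi h p^k/q}/(k p^{sk}). -/
def plogPsiAlt (h : ℤ) (q : ℕ) (s : ℂ) : ℂ :=
  ∑' (p : Nat.Primes) (k : ℕ),
    Complex.exp (2 * (Real.pi : ℂ) * Complex.I * (h : ℂ) * (((p : ℕ) : ℂ) ^ (k + 1)) / (q : ℂ))
      / (((k : ℂ) + 1) * ((p : ℕ) : ℂ) ^ (s * ((k : ℂ) + 1)))

end

section Auxx

open Complex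

/-- norm 1 for exp of real multiple of I -/
lemma norm_exp_eq_one' {w : ℂ} (x : ℝ) (hw : w = (x : ℂ) * I) : ‖Complex.exp w‖ = 1 := by
  rw [hw]; exact Complex.norm_exp_ofReal_mul_I x

lemma norm_term_le' (p : Nat.Primes) (k c : ℕ) (hc : 1 ≤ c) (s : ℂ) (σ : ℝ)
    (h0 : 0 < σ) (hσ : σ ≤ s.re) (z : ℂ) (hz : ‖z‖ ≤ 2) :
    ‖z / (((k : ℂ) + c) * ((p : ℕ) : ℂ) ^ (s * ((k : ℂ) + c)))‖
      ≤ 2 * ((p : ℕ) : ℝ) ^ (-σ * c) * ((2 : ℝ) ^ (-σ)) ^ k := by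
  have hp2 : (2 : ℝ) ≤ ((p : ℕ) : ℝ) := by exact_mod_cast p.2.two_le
  have hp1 : (1 : ℝ) < ((p : ℕ) : ℝ) := by linarith
  have hp0 : (0 : ℝ) < ((p : ℕ) : ℝ) := by linarith
  have hkcC : ((k : ℂ) + c) = (((k + c : ℕ) : ℂ)) := by push_cast; ring
  have hnorm : ‖((p : ℕ) : ℂ) ^ (s * ((k : ℂ) + c))‖ = ((p:ℕ):ℝ) ^ (s.re * (k + c : ℕ)) := by
    rw [Complex.norm_natCast_cpow_of_pos p.2.pos]
    congr 1
    rw [hkcC]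
    simp [Complex.mul_re]
  rw [norm_div, norm_mul, hnorm]
  have hkc : ‖(k : ℂ) + c‖ = ((k + c : ℕ) : ℝ) := by
    rw [hkcC, Complex.norm_natCast]
  rw [hkc]
  have hkc1 : (1 : ℝ) ≤ ((k + c : ℕ) : ℝ) := by
    have : 1 ≤ k + c := le_add_of_nonneg_of_le (Nat.zero_le _) hc
    exact_mod_cast this
  have hden1 : ((p:ℕ):ℝ) ^ (σ * (k + c : ℕ)) ≤ ((p:ℕ):ℝ) ^ (s.re * (k + c : ℕ)) := by
    apply Real.rpow_le_rpow_of_exponent_le (le_of_lt hp1)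
    have : (0:ℝ) ≤ ((k + c : ℕ):ℝ) := by positivity
    nlinarith
  have hpos : (0:ℝ) < ((p:ℕ):ℝ) ^ (σ * (k + c : ℕ)) := Real.rpow_pos_of_pos hp0 _
  calc ‖z‖ / (((k + c : ℕ):ℝ) * ((p:ℕ):ℝ) ^ (s.re * (k + c : ℕ)))
      ≤ 2 / (1 * (((p:ℕ):ℝ) ^ (σ * (k + c : ℕ)))) := by
        gcongr
        all_goals first | exact hz | exact hkc1 | exact hden1 | positivity
    _ = 2 * (((p:ℕ):ℝ) ^ (-σ)) ^ (k + c) := by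
        rw [one_mul, div_eq_mul_inv, ← Real.rpow_natCast (((p:ℕ):ℝ) ^ (-σ)) (k+c),
          ← Real.rpow_mul (le_of_lt hp0), ← Real.rpow_neg (le_of_lt hp0)]
        ring_nf
    _ ≤ 2 * ((p : ℕ) : ℝ) ^ (-σ * c) * ((2 : ℝ) ^ (-σ)) ^ k := by
        have e1 : (((p:ℕ):ℝ) ^ (-σ)) ^ c = ((p:ℕ):ℝ) ^ (-σ * c) := by
          rw [← Real.rpow_natCast (((p:ℕ):ℝ) ^ (-σ)) c, ← Real.rpow_mul (le_of_lt hp0)]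
        rw [pow_add, ← mul_assoc, mul_right_comm, e1]
        have hbase : ((p:ℕ):ℝ) ^ (-σ) ≤ (2:ℝ) ^ (-σ) := by
          rw [Real.rpow_neg (le_of_lt hp0), Real.rpow_neg (by norm_num : (0:ℝ) ≤ 2)]
          exact inv_anti₀ (Real.rpow_pos_of_pos (by norm_num) _)
            (Real.rpow_le_rpow (by norm_num) hp2 (le_of_lt h0))
        exact mul_le_mul_of_nonneg_left
          (pow_le_pow_left₀ (by positivity) hbase k) (by positivity)

lemma summable_u' (σ : ℝ) (h0 : 0 < σ) (c : ℕ) (hc : 1 < σ * c) :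
    Summable (fun pk : Nat.Primes × ℕ =>
      2 * ((pk.1 : ℕ) : ℝ) ^ (-σ * c) * ((2 : ℝ) ^ (-σ)) ^ pk.2) := by
  have hf : Summable (fun p : Nat.Primes => 2 * ((p : ℕ) : ℝ) ^ (-σ * c)) := by
    apply Summable.mul_left
    exact Nat.Primes.summable_rpow.mpr (by linarith)
  have hg : Summable (fun k : ℕ => ((2 : ℝ) ^ (-σ)) ^ k) := by
    apply summable_geometric_of_lt_one (by positivity)
    exact Real.rpow_lt_one_of_one_lt_of_neg (by norm_num) (by linarith)
  exact hf.mul_of_nonneg hg (fun p => by positivity) (fun k => by positivity)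

lemma summable_term' {s : ℂ} {σ : ℝ} (h0 : 0 < σ) (hσ : σ ≤ s.re) (c : ℕ) (hc1 : 1 ≤ c)
    (hc : 1 < σ * c) (z : Nat.Primes → ℕ → ℂ) (hz : ∀ p k, ‖z p k‖ ≤ 2) :
    Summable (fun pk : Nat.Primes × ℕ =>
      z pk.1 pk.2 / (((pk.2 : ℂ) + c) * ((pk.1 : ℕ) : ℂ) ^ (s * ((pk.2 : ℂ) + c)))) := by
  apply Summable.of_norm_bounded (summable_u' σ h0 c hc)
  intro pk
  exact norm_term_le' pk.1 pk.2 c hc1 s σ h0 hσ _ (hz pk.1 pk.2)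

lemma Apd_prime {p : ℕ} (hp : p.Prime) : Apd p = p := by
  unfold Apd
  rw [hp.factorization]
  simp

lemma Apd_mul {m n : ℕ} (hm : m ≠ 0) (hn : n ≠ 0) : Apd (m * n) = Apd m + Apd n := by
  unfold Apd
  rw [Nat.factorization_mul hm hn]
  exact Finsupp.sum_add_index' (by simp) (by intros; ring)

lemma psiA_mul (h : ℤ) (q : ℕ) {m n : ℕ} (hm : m ≠ 0) (hn : n ≠ 0) :
    psiA h q (m * n) = psiA h q m * psiA h q n := by
  unfold psiA
  rw [← Complex.exp_add, Apd_mul hm hn]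
  congr 1
  push_cast
  ring

lemma norm_psiA (h : ℤ) (q n : ℕ) : ‖psiA h q n‖ = 1 :=
  norm_exp_eq_one' (2 * Real.pi * h * (Apd n) / q) (by push_cast; ring)

noncomputable def psiF (h : ℤ) (q : ℕ) (s : ℂ) : ℕ →*₀ ℂ where
  toFun n := if n = 0 then 0 else psiA h q n / (n : ℂ) ^ s
  map_zero' := by simp
  map_one' := by
    rw [if_neg one_ne_zero]
    unfold psiA Apd
    simp
  map_mul' := by
    intro m n
    rcases eq_or_ne m 0 with rfl | hm
    · simp
    rcases eq_or_ne n 0 with rfl | hn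
    · simp
    rw [if_neg (mul_ne_zero hm hn), if_neg hm, if_neg hn, psiA_mul h q hm hn]
    have hcast : ((m * n : ℕ) : ℂ) ^ s = (m : ℂ) ^ s * (n : ℂ) ^ s := by
      have e : ((m * n : ℕ) : ℂ) = (((m : ℝ) : ℂ)) * (((n : ℝ) : ℂ)) := by push_cast; ring
      rw [e, Complex.mul_cpow_ofReal_nonneg (Nat.cast_nonneg m) (Nat.cast_nonneg n)]
      norm_num
    rw [hcast]
    ring

lemma psiF_apply (h : ℤ) (q : ℕ) (s : ℂ) {n : ℕ} (hn : n ≠ 0) :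
    psiF h q s n = psiA h q n / (n : ℂ) ^ s := by
  simp only [psiF, MonoidWithZeroHom.coe_mk, ZeroHom.coe_mk]
  rw [if_neg hn]

end Auxx


set_option maxHeartbeats 4000000 in
theorem stmt5 (h : ℤ) (q : ℕ) (hq : 1 < q) (hcop : IsCoprime h (q : ℤ)) :
    (∀ s : ℂ, 1 < s.re →
        plogPsi h q s = plogPsiAlt h q s + Thq h q s ∧
        Complex.exp (plogPsi h q s) = Lpsi h q s) ∧
    ∀ ε : ℝ, 0 < ε →
      DifferentiableOn ℂ (Thq h q) {s : ℂ | 1 / 2 + ε < s.re} ∧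
      ∃ C : ℝ, ∀ (h' : ℤ) (q' : ℕ), 1 < q' → IsCoprime h' (q' : ℤ) →
        ∀ s : ℂ, 1 / 2 + ε < s.re → ‖Thq h' q' s‖ ≤ C := by
  have hC2 : ((2:ℕ):ℂ) = (2:ℂ) := by norm_num
  have hC1 : ((1:ℕ):ℂ) = (1:ℂ) := by norm_num
  constructor
  · -- part 1
    intro s hs
    have hs0 : s ≠ 0 := by
      intro h0; rw [h0] at hs; simp at hs; linarith
    have hsre : (0:ℝ) < s.re := by linarith
    -- the three product-indexed families
    set a : Nat.Primes × ℕ → ℂ := fun pk =>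
      Complex.exp (2 * (Real.pi : ℂ) * Complex.I * ((pk.1 : ℕ) : ℂ) * (h : ℂ) * ((pk.2 : ℂ) + 1) / (q : ℂ))
        / (((pk.2 : ℂ) + 1) * ((pk.1 : ℕ) : ℂ) ^ (s * ((pk.2 : ℂ) + 1))) with ha_def
    set b : Nat.Primes × ℕ → ℂ := fun pk =>
      Complex.exp (2 * (Real.pi : ℂ) * Complex.I * (h : ℂ) * (((pk.1 : ℕ) : ℂ) ^ (pk.2 + 1)) / (q : ℂ))
        / (((pk.2 : ℂ) + 1) * ((pk.1 : ℕ) : ℂ) ^ (s * ((pk.2 : ℂ) + 1))) with hb_def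
    set t : Nat.Primes × ℕ → ℂ := fun pk =>
      (Complex.exp (2 * (Real.pi : ℂ) * Complex.I * ((pk.1 : ℕ) : ℂ) * (h : ℂ) * ((pk.2 : ℂ) + 2) / (q : ℂ))
        - Complex.exp (2 * (Real.pi : ℂ) * Complex.I * (((pk.1 : ℕ) : ℂ) ^ (pk.2 + 2)) * (h : ℂ) / (q : ℂ)))
        / (((pk.2 : ℂ) + 2) * ((pk.1 : ℕ) : ℂ) ^ (s * ((pk.2 : ℂ) + 2))) with ht_def
    have hna : ∀ p : Nat.Primes, ∀ k : ℕ,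
        ‖Complex.exp (2 * (Real.pi : ℂ) * Complex.I * ((p : ℕ) : ℂ) * (h : ℂ) * ((k : ℂ) + 1) / (q : ℂ))‖ ≤ 2 := by
      intro p k
      rw [norm_exp_eq_one' (2 * Real.pi * (p:ℕ) * h * ((k:ℝ) + 1) / q) (by push_cast; ring)]
      norm_num
    have hnb : ∀ p : Nat.Primes, ∀ k : ℕ,
        ‖Complex.exp (2 * (Real.pi : ℂ) * Complex.I * (h : ℂ) * (((p : ℕ) : ℂ) ^ (k + 1)) / (q : ℂ))‖ ≤ 2 := by
      intro p k
      rw [norm_exp_eq_one' (2 * Real.pi * h * ((p:ℕ):ℝ) ^ (k + 1) / q) (by push_cast; ring)]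
      norm_num
    have hnt : ∀ p : Nat.Primes, ∀ k : ℕ,
        ‖Complex.exp (2 * (Real.pi : ℂ) * Complex.I * ((p : ℕ) : ℂ) * (h : ℂ) * ((k : ℂ) + 2) / (q : ℂ))
          - Complex.exp (2 * (Real.pi : ℂ) * Complex.I * (((p : ℕ) : ℂ) ^ (k + 2)) * (h : ℂ) / (q : ℂ))‖ ≤ 2 := by
      intro p k
      refine (norm_sub_le _ _).trans ?_
      rw [norm_exp_eq_one' (2 * Real.pi * (p:ℕ) * h * ((k:ℝ) + 2) / q) (by push_cast; ring),
        norm_exp_eq_one' (2 * Real.pi * ((p:ℕ):ℝ) ^ (k + 2) * h / q) (by push_cast; ring)]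
      norm_num
    have Sa : Summable a := by
      have := summable_term' (s := s) (σ := s.re) hsre le_rfl 1 le_rfl (by simpa using hs)
        (fun p k => Complex.exp (2 * (Real.pi : ℂ) * Complex.I * ((p : ℕ) : ℂ) * (h : ℂ) * ((k : ℂ) + 1) / (q : ℂ)))
        hna
      simpa [ha_def, hC1] using this
    have Sb : Summable b := by
      have := summable_term' (s := s) (σ := s.re) hsre le_rfl 1 le_rfl (by simpa using hs)
        (fun p k => Complex.exp (2 * (Real.pi : ℂ) * Complex.I * (h : ℂ) * (((p : ℕ) : ℂ) ^ (k + 1)) / (q : ℂ)))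
        hnb
      simpa [hb_def, hC1] using this
    have St : Summable t := by
      have := summable_term' (s := s) (σ := s.re) hsre le_rfl 2 (by norm_num) (by push_cast; linarith)
        (fun p k => Complex.exp (2 * (Real.pi : ℂ) * Complex.I * ((p : ℕ) : ℂ) * (h : ℂ) * ((k : ℂ) + 2) / (q : ℂ))
          - Complex.exp (2 * (Real.pi : ℂ) * Complex.I * (((p : ℕ) : ℂ) ^ (k + 2)) * (h : ℂ) / (q : ℂ)))
        hnt
      simpa [ht_def, hC2] using this
    have ePsi : plogPsi h q s = ∑' pk : Nat.Primes × ℕ, a pk :=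
      (Summable.tsum_prod' Sa (fun p => Sa.prod_factor p)).symm
    have eAlt : plogPsiAlt h q s = ∑' pk : Nat.Primes × ℕ, b pk :=
      (Summable.tsum_prod' Sb (fun p => Sb.prod_factor p)).symm
    have eT : Thq h q s = ∑' pk : Nat.Primes × ℕ, t pk :=
      (Summable.tsum_prod' St (fun p => St.prod_factor p)).symm
    constructor
    · -- plogPsi = plogPsiAlt + Thq
      rw [ePsi, eAlt, eT]
      have key : ∑' pk : Nat.Primes × ℕ, (a pk - b pk) = ∑' pk : Nat.Primes × ℕ, t pk := by
        have hinj : Function.Injective (fun pk : Nat.Primes × ℕ => (pk.1, pk.2 + 1)) := by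
          intro x y hxy
          simp only [Prod.mk.injEq] at hxy
          exact Prod.ext hxy.1 (by omega)
        have hsupp : Function.support (fun pk : Nat.Primes × ℕ => a pk - b pk) ⊆
            Set.range (fun pk : Nat.Primes × ℕ => (pk.1, pk.2 + 1)) := by
          intro pk hpk
          rcases pk with ⟨p, k⟩
          match k with
          | 0 =>
            exfalso
            apply hpk
            simp only [ha_def, hb_def]
            rw [sub_eq_zero]
            congr 2
            push_cast
            ring
          | k + 1 => exact ⟨(p, k), rfl⟩
        have := hinj.tsum_eq (f := fun pk : Nat.Primes × ℕ => a pk - b pk) hsupp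
        rw [← this]
        apply tsum_congr
        intro pk
        rcases pk with ⟨p, k⟩
        simp only [ha_def, hb_def, ht_def]
        have e1 : ((k + 1 : ℕ) : ℂ) + 1 = (k : ℂ) + 2 := by push_cast; ring
        have e2 : (2 * (Real.pi : ℂ) * Complex.I * ((p : ℕ) : ℂ) * (h : ℂ) * (((k + 1 : ℕ) : ℂ) + 1) / (q : ℂ))
            = 2 * (Real.pi : ℂ) * Complex.I * ((p : ℕ) : ℂ) * (h : ℂ) * ((k : ℂ) + 2) / (q : ℂ) := by
          push_cast; ring
        have e3 : (2 * (Real.pi : ℂ) * Complex.I * (h : ℂ) * (((p : ℕ) : ℂ) ^ ((k + 1) + 1)) / (q : ℂ))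
            = 2 * (Real.pi : ℂ) * Complex.I * (((p : ℕ) : ℂ) ^ (k + 2)) * (h : ℂ) / (q : ℂ) := by
          rw [show (k + 1) + 1 = k + 2 by omega]; ring
        rw [e2, e3, e1, sub_div]
      rw [← key, Summable.tsum_sub Sa Sb]
      ring
    · -- exp identity
      have hq0 : (q : ℂ) ≠ 0 := Nat.cast_ne_zero.mpr (by omega)
      set F : ℕ →*₀ ℂ := psiF h q s with hF_def
      have hFval : ∀ n : ℕ, n ≠ 0 → F n = psiA h q n / (n : ℂ) ^ s :=
        fun n hn => psiF_apply h q s hn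
      have hFsum : Summable (fun n => ‖F n‖) := by
        refine Summable.of_nonneg_of_le (fun n => norm_nonneg _)
          (f := fun n : ℕ => 1 / (n : ℝ) ^ s.re) ?_ (Real.summable_one_div_nat_rpow.mpr hs)
        intro n
        rcases eq_or_ne n 0 with rfl | hn
        · rw [map_zero, norm_zero]
          positivity
        · rw [hFval n hn, norm_div, norm_psiA,
            Complex.norm_natCast_cpow_of_pos (Nat.pos_of_ne_zero hn)]
      have hEP := EulerProduct.exp_tsum_primes_log_eq_tsum (f := F) hFsum
      have hLpsi : ∑' n : ℕ, F n = Lpsi h q s := by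
        apply tsum_congr
        intro n
        rcases eq_or_ne n 0 with rfl | hn
        · rw [map_zero]
          show (0:ℂ) = psiA h q 0 / (0:ℕ) ^ s
          rw [Nat.cast_zero, Complex.zero_cpow hs0, div_zero]
        · rw [hFval n hn]
      have hlog : plogPsi h q s = ∑' p : Nat.Primes, -Complex.log (1 - F (p : ℕ)) := by
        unfold plogPsi
        apply tsum_congr
        intro p
        have hp0 : ((p : ℕ) : ℝ) > 0 := by exact_mod_cast p.2.pos
        have hp1 : (1 : ℝ) < ((p : ℕ) : ℝ) := by exact_mod_cast p.2.one_lt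
        have hps : ((p : ℕ) : ℂ) ^ s ≠ 0 := by
          rw [Complex.cpow_def_of_ne_zero (by exact_mod_cast p.2.pos.ne')]
          exact Complex.exp_ne_zero _
        set z : ℂ := psiA h q (p : ℕ) / ((p : ℕ) : ℂ) ^ s with hz_def
        have hzn : ‖z‖ < 1 := by
          rw [hz_def, norm_div, norm_psiA, Complex.norm_natCast_cpow_of_pos p.2.pos,
            div_lt_one (Real.rpow_pos_of_pos hp0 _)]
          exact Real.one_lt_rpow_iff_of_pos hp0 |>.mpr (Or.inl ⟨hp1, by linarith⟩)
        have H := Complex.hasSum_taylorSeries_neg_log hzn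
        have H1 : HasSum (fun k : ℕ => z ^ (k + 1) / ((k + 1 : ℕ) : ℂ)) (-Complex.log (1 - z)) := by
          refine (hasSum_nat_add_iff (f := fun n : ℕ => z ^ n / (n : ℂ)) 1).mpr ?_
          simpa using H
        have hterm : (fun k : ℕ => z ^ (k + 1) / ((k + 1 : ℕ) : ℂ)) = fun k : ℕ =>
            Complex.exp (2 * (Real.pi : ℂ) * Complex.I * ((p : ℕ) : ℂ) * (h : ℂ) * ((k : ℂ) + 1) / (q : ℂ))
              / (((k : ℂ) + 1) * ((p : ℕ) : ℂ) ^ (s * ((k : ℂ) + 1))) := by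
          funext k
          have hpsiA : psiA h q (p : ℕ) =
              Complex.exp (2 * (Real.pi : ℂ) * Complex.I * (h : ℂ) * ((p : ℕ) : ℂ) / (q : ℂ)) := by
            unfold psiA
            rw [Apd_prime p.2]
          have hnum : psiA h q (p : ℕ) ^ (k + 1) =
              Complex.exp (2 * (Real.pi : ℂ) * Complex.I * ((p : ℕ) : ℂ) * (h : ℂ) * ((k : ℂ) + 1) / (q : ℂ)) := by
            rw [hpsiA, ← Complex.exp_nat_mul]
            congr 1
            push_cast
            ring
          have hden : (((p : ℕ) : ℂ) ^ s) ^ (k + 1) = ((p : ℕ) : ℂ) ^ (s * ((k : ℂ) + 1)) := by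
            rw [← Complex.cpow_nat_mul]
            congr 1
            push_cast
            ring
          rw [hz_def, div_pow, hnum, hden]
          rw [div_div, mul_comm (((p : ℕ) : ℂ) ^ (s * ((k : ℂ) + 1)))]
          push_cast
          ring_nf
        have hFp : F (p : ℕ) = z := hFval (p : ℕ) p.2.pos.ne'
        rw [hFp]
        exact (hterm ▸ H1).tsum_eq
      rw [hlog, hEP, hLpsi]
  · -- part 2
    intro ε hε
    have hσ0 : (0:ℝ) < 1/2 + ε := by linarith
    have hσc : (1:ℝ) < (1/2 + ε) * ((2:ℕ):ℝ) := by push_cast; linarith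
    set U : Set ℂ := {s : ℂ | 1 / 2 + ε < s.re} with hU_def
    have hUopen : IsOpen U := isOpen_lt continuous_const Complex.continuous_re
    set G : ℤ → ℕ → ℂ → Nat.Primes × ℕ → ℂ := fun h' q' s pk =>
      (Complex.exp (2 * (Real.pi : ℂ) * Complex.I * ((pk.1 : ℕ) : ℂ) * (h' : ℂ) * ((pk.2 : ℂ) + 2) / (q' : ℂ))
        - Complex.exp (2 * (Real.pi : ℂ) * Complex.I * (((pk.1 : ℕ) : ℂ) ^ (pk.2 + 2)) * (h' : ℂ) / (q' : ℂ)))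
        / (((pk.2 : ℂ) + 2) * ((pk.1 : ℕ) : ℂ) ^ (s * ((pk.2 : ℂ) + 2))) with hG_def
    set u : Nat.Primes × ℕ → ℝ := fun pk =>
      2 * ((pk.1 : ℕ) : ℝ) ^ (-(1/2 + ε) * ((2:ℕ):ℝ)) * ((2 : ℝ) ^ (-(1/2 + ε))) ^ pk.2 with hu_def
    have hu : Summable u := summable_u' (1/2 + ε) hσ0 2 hσc
    have hnt : ∀ (h' : ℤ) (q' : ℕ) (p : Nat.Primes) (k : ℕ),
        ‖Complex.exp (2 * (Real.pi : ℂ) * Complex.I * ((p : ℕ) : ℂ) * (h' : ℂ) * ((k : ℂ) + 2) / (q' : ℂ))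
          - Complex.exp (2 * (Real.pi : ℂ) * Complex.I * (((p : ℕ) : ℂ) ^ (k + 2)) * (h' : ℂ) / (q' : ℂ))‖ ≤ 2 := by
      intro h' q' p k
      refine (norm_sub_le _ _).trans ?_
      rw [norm_exp_eq_one' (2 * Real.pi * (p:ℕ) * h' * ((k:ℝ) + 2) / q') (by push_cast; ring),
        norm_exp_eq_one' (2 * Real.pi * ((p:ℕ):ℝ) ^ (k + 2) * h' / q') (by push_cast; ring)]
      norm_num
    have hGle : ∀ (h' : ℤ) (q' : ℕ) (s : ℂ), 1/2 + ε ≤ s.re → ∀ pk : Nat.Primes × ℕ,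
        ‖G h' q' s pk‖ ≤ u pk := by
      intro h' q' s hs pk
      have := norm_term_le' pk.1 pk.2 2 (by norm_num) s (1/2 + ε) hσ0 hs _ (hnt h' q' pk.1 pk.2)
      simpa [hG_def, hu_def, hC2] using this
    have hsumG : ∀ (h' : ℤ) (q' : ℕ) (s : ℂ), 1/2 + ε ≤ s.re → Summable (G h' q' s) := by
      intro h' q' s hs
      exact Summable.of_norm_bounded hu (hGle h' q' s hs)
    have hThq_eq : ∀ (h' : ℤ) (q' : ℕ) (s : ℂ), 1/2 + ε ≤ s.re →
        Thq h' q' s = ∑' pk : Nat.Primes × ℕ, G h' q' s pk := by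
      intro h' q' s hs
      exact (Summable.tsum_prod' (hsumG h' q' s hs) (fun p => (hsumG h' q' s hs).prod_factor p)).symm
    constructor
    · -- differentiability
      have hdiff : ∀ pk : Nat.Primes × ℕ, DifferentiableOn ℂ (fun w => G h q w pk) U := by
        intro pk
        apply Differentiable.differentiableOn
        have hpne : ((pk.1 : ℕ) : ℂ) ≠ 0 := Nat.cast_ne_zero.mpr pk.1.2.pos.ne'
        have hkne : ((pk.2 : ℂ) + 2) ≠ 0 := by
          have e : ((pk.2 : ℂ) + 2) = ((pk.2 + 2 : ℕ) : ℂ) := by push_cast; ring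
          rw [e]
          exact Nat.cast_ne_zero.mpr (by omega)
        apply Differentiable.div (differentiable_const _)
        · exact (differentiable_const _).mul
            ((differentiable_id.mul_const _).const_cpow (Or.inl hpne))
        · intro x
          apply mul_ne_zero hkne
          rw [Complex.cpow_def_of_ne_zero hpne]
          exact Complex.exp_ne_zero _
      have hled : ∀ (pk : Nat.Primes × ℕ) (w : ℂ), w ∈ U → ‖G h q w pk‖ ≤ u pk := by
        intro pk w hw
        exact hGle h q w (le_of_lt hw) pk
      have hd := differentiableOn_tsum_of_summable_norm hu hdiff hUopen hled
      exact hd.congr (fun x hx => hThq_eq h q x (le_of_lt hx))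
    · -- uniform bound
      refine ⟨∑' pk, u pk, ?_⟩
      intro h' q' hq' hcop' s hs
      rw [hThq_eq h' q' s (le_of_lt hs)]
      have hnormsum : Summable (fun pk : Nat.Primes × ℕ => ‖G h' q' s pk‖) :=
        Summable.of_nonneg_of_le (fun pk => norm_nonneg _) (hGle h' q' s (le_of_lt hs)) hu
      calc ‖∑' pk : Nat.Primes × ℕ, G h' q' s pk‖
          ≤ ∑' pk : Nat.Primes × ℕ, ‖G h' q' s pk‖ := norm_tsum_le_tsum_norm hnormsum
        _ ≤ ∑' pk, u pk := Summable.tsum_le_tsum (hGle h' q' s (le_of_lt hs)) hnormsum hu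
end

section
/- Let $h,q$ be coprime integers with $q > 2$. For $s \in \mathbf{C}$ with $\Re(s) > 1$, one has the representation $L(s, \psi_{h/q}) = \Big(\prod_{\chi \bmod q,\ \chi \ne \chi_0} L(s, \overline{\chi})^{\tau(\chi)\overline{\chi(h)}/\phi(q)}\Big) \cdot \zeta(s)^{\mu(q)/\phi(q)} \cdot e^{U_{h,q}(s)}$, where $U_{h,q}(s) := -\frac{\mu(q)}{\phi(q)}\sum_{p \mid q}\sum_{k=1}^\infty \frac{1}{k p^{sk}} + \sum_{p \mid q}\sum_{k=1}^\infty \frac{e^{2\pi i h p^k/q}}{k\, p^{sk}} + \sum_{p}\sum_{k=2}^\infty \frac{e^{2\pi i p h k/q} - e^{2\pi i p^k h/q}}{k\, p^{sk}}$, and the complex powers are defined via the principal branch of the logarithms $\log L(s,\overline{\chi})$, $\log \zeta(s)$ given by the absolutely convergent prime-power sums in $\Re(s) > 1$. -/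
open Complex Finset Filter Asymptotics intervalIntegral
open scoped Real Topology Classical

namespace StmtAux

/-- denominator -/
noncomputable def D (s : ℂ) (p : ℕ) (k : ℕ) : ℂ := ((k:ℂ)+1) * (p:ℂ)^(s*((k:ℂ)+1))

lemma D_ne_zero {s : ℂ} {p : ℕ} (hp : 0 < p) (k : ℕ) : D s p k ≠ 0 := by
  apply mul_ne_zero
  · exact_mod_cast (Nat.cast_add_one_ne_zero k : ((k:ℂ)+1) ≠ 0)
  · rw [Ne, Complex.cpow_eq_zero_iff, not_and_or]
    left
    exact_mod_cast hp.ne'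

lemma norm_D {s : ℂ} {p : ℕ} (hp : 0 < p) (k : ℕ) :
    ‖D s p k‖ = ((k:ℝ)+1) * ((p:ℝ) ^ s.re)^(k+1) := by
  rw [D, norm_mul]
  have h1 : ‖((k:ℂ)+1)‖ = ((k:ℝ)+1) := by
    rw [show ((k:ℂ)+1) = (((k:ℝ)+1 : ℝ) : ℂ) by push_cast; ring, Complex.norm_real,
      Real.norm_eq_abs, _root_.abs_of_nonneg (by positivity)]
  have h2 : ‖(p:ℂ)^(s*((k:ℂ)+1))‖ = (p:ℝ) ^ (s.re * ((k:ℝ)+1)) := by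
    rw [Complex.norm_natCast_cpow_of_pos hp]
    congr 1
    simp [Complex.mul_re]
  rw [h1, h2, Real.rpow_mul (by positivity : (0:ℝ) ≤ (p:ℝ)),
    show ((k:ℝ)+1) = ((k+1 : ℕ) : ℝ) by push_cast; ring, Real.rpow_natCast]

lemma norm_term_le {s : ℂ} {p : ℕ} (hp : 0 < p) (k : ℕ) {c : ℂ} (hc : ‖c‖ ≤ 1) :
    ‖c / D s p k‖ ≤ ((p:ℝ) ^ (-s.re))^(k+1) := by
  have hP : (0:ℝ) < (p:ℝ) ^ s.re := by positivity
  rw [norm_div, norm_D hp, Real.rpow_neg (by positivity), inv_pow]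
  rw [div_le_iff₀ (by positivity)]
  calc ‖c‖ ≤ 1 := hc
    _ ≤ ((k:ℝ)+1) := by linarith [Nat.cast_nonneg (α := ℝ) k]
    _ = (((p:ℝ) ^ s.re) ^ (k+1))⁻¹ * (((k:ℝ)+1) * ((p:ℝ) ^ s.re)^(k+1)) := by
        field_simp

end StmtAux

namespace StmtAux
open Complex

lemma r_nonneg (p : ℕ) (σ : ℝ) : 0 ≤ (p:ℝ) ^ (-σ) := Real.rpow_nonneg (Nat.cast_nonneg p) _

lemma r_le_half {p : ℕ} (hp : 2 ≤ p) {σ : ℝ} (hσ : 1 < σ) : (p:ℝ) ^ (-σ) ≤ 1/2 := by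
  have h2 : (2:ℝ) ≤ (p:ℝ) := by exact_mod_cast hp
  calc (p:ℝ) ^ (-σ) ≤ (p:ℝ) ^ (-1 : ℝ) :=
        Real.rpow_le_rpow_of_exponent_le (by linarith) (by linarith)
    _ = ((p:ℝ))⁻¹ := Real.rpow_neg_one _
    _ ≤ 1/2 := by
        rw [one_div]
        exact inv_anti₀ (by norm_num) h2

lemma summable_geom {p : ℕ} (hp : 2 ≤ p) {σ : ℝ} (hσ : 1 < σ) :
    Summable (fun k : ℕ => ((p:ℝ) ^ (-σ))^(k+1)) := by
  have := (summable_geometric_of_lt_one (r_nonneg p σ) ((r_le_half hp hσ).trans_lt (by norm_num))).mul_left ((p:ℝ) ^ (-σ))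
  simpa [pow_succ, mul_comm] using this

lemma tsum_geom_le {p : ℕ} (hp : 2 ≤ p) {σ : ℝ} (hσ : 1 < σ) :
    ∑' k : ℕ, ((p:ℝ) ^ (-σ))^(k+1) ≤ 2 * (p:ℝ) ^ (-σ) := by
  set r := (p:ℝ) ^ (-σ) with hr
  have hr0 : 0 ≤ r := r_nonneg p σ
  have hr2 : r ≤ 1/2 := r_le_half hp hσ
  have hr1 : r < 1 := hr2.trans_lt (by norm_num)
  have : ∑' k : ℕ, r^(k+1) = r * (1-r)⁻¹ := by
    rw [← tsum_geometric_of_lt_one hr0 hr1, ← tsum_mul_left]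
    congr 1; ext k; rw [pow_succ, mul_comm]
  rw [this]
  have h1r : (1/2:ℝ) ≤ 1 - r := by linarith
  have : (1-r)⁻¹ ≤ 2 := by
    rw [show (2:ℝ) = (1/2 : ℝ)⁻¹ by norm_num]
    exact inv_anti₀ (by norm_num) h1r
  nlinarith

/-- summability in `k` of terms `c k / D s p k` with bounded numerators -/
lemma summable_term {s : ℂ} (hσ : 1 < s.re) {p : ℕ} (hp : 2 ≤ p) {c : ℕ → ℂ}
    (hc : ∀ k, ‖c k‖ ≤ 1) : Summable (fun k => c k / D s p k) :=
  Summable.of_norm_bounded (summable_geom hp hσ) fun k => norm_term_le (by omega) k (hc k)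

/-- norm bound for the tsum over `k` -/
lemma norm_tsum_le {s : ℂ} (hσ : 1 < s.re) {p : ℕ} (hp : 2 ≤ p) {c : ℕ → ℂ}
    (hc : ∀ k, ‖c k‖ ≤ 1) : ‖∑' k, c k / D s p k‖ ≤ 2 * (p:ℝ) ^ (-s.re) := by
  have hsn : Summable (fun k => ‖c k / D s p k‖) :=
    Summable.of_nonneg_of_le (fun k => norm_nonneg _)
      (fun k => norm_term_le (by omega) k (hc k)) (summable_geom hp hσ)
  calc ‖∑' k, c k / D s p k‖ ≤ ∑' k, ‖c k / D s p k‖ := norm_tsum_le_tsum_norm hsn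
    _ ≤ ∑' k : ℕ, ((p:ℝ) ^ (-s.re))^(k+1) :=
        Summable.tsum_le_tsum (fun k => norm_term_le (by omega) k (hc k)) hsn (summable_geom hp hσ)
    _ ≤ 2 * (p:ℝ) ^ (-s.re) := tsum_geom_le hp hσ

/-- summability over primes -/
lemma summable_primes {s : ℂ} (hσ : 1 < s.re) {F : Nat.Primes → ℂ}
    (hF : ∀ p : Nat.Primes, ‖F p‖ ≤ 2 * ((p:ℕ):ℝ) ^ (-s.re)) : Summable F :=
  Summable.of_norm_bounded ((Nat.Primes.summable_rpow.2 (by linarith)).mul_left 2) hF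

end StmtAux

namespace StmtAux
open Complex

lemma norm_exp_real_mul_I (r : ℝ) : ‖Complex.exp ((r:ℂ) * I)‖ = 1 := by
  exact Complex.norm_exp_ofReal_mul_I r

/-- periodicity: `e(m/q)` only depends on `m mod q` -/
lemma exp_period (q : ℕ) [NeZero q] (m : ℤ) :
    Complex.exp (2 * (Real.pi:ℂ) * I * (m:ℂ) / (q:ℂ)) =
      Complex.exp (2 * (Real.pi:ℂ) * I * (((m : ZMod q).val : ℕ) : ℂ) / (q:ℂ)) := by
  have hq : (q:ℂ) ≠ 0 := Nat.cast_ne_zero.mpr (NeZero.ne q)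
  have hdvd : (q:ℤ) ∣ m - ((m : ZMod q).val : ℤ) := by
    rw [← ZMod.intCast_zmod_eq_zero_iff_dvd]
    push_cast
    simp [ZMod.intCast_cast, ZMod.natCast_val]
  obtain ⟨t, ht⟩ := hdvd
  have hm : (m:ℂ) = (((m : ZMod q).val : ℕ) : ℂ) + (q:ℂ) * (t:ℂ) := by
    have : (m:ℂ) - (((m : ZMod q).val : ℤ) : ℂ) = ((q:ℤ):ℂ) * (t:ℂ) := by
      exact_mod_cast congrArg (fun z : ℤ => (z:ℂ)) ht
    push_cast at this ⊢
    linear_combination this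
  rw [hm]
  rw [show 2 * (Real.pi:ℂ) * I * ((((m : ZMod q).val : ℕ) : ℂ) + (q:ℂ) * (t:ℂ)) / (q:ℂ)
      = 2 * (Real.pi:ℂ) * I * (((m : ZMod q).val : ℕ) : ℂ) / (q:ℂ) + (t:ℂ) * (2 * (Real.pi:ℂ) * I) by
    field_simp]
  rw [Complex.exp_add, Complex.exp_int_mul_two_pi_mul_I, mul_one]

end StmtAux

namespace StmtAux
open Complex

lemma gaussS_one (q : ℕ) [NeZero q] :
    gaussS (1 : DirichletCharacter ℂ q) = ((ArithmeticFunction.moebius q : ℤ) : ℂ) := by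
  classical
  have hq0 : q ≠ 0 := NeZero.ne q
  set ω : ℕ → ℂ := fun l => Complex.exp (2 * (Real.pi:ℂ) * I * (l:ℂ) / (q:ℂ)) with hω
  have hmu : ∀ n : ℕ, (if n = 1 then (1:ℂ) else 0) = ∑ d ∈ n.divisors, ((ArithmeticFunction.moebius d : ℤ) : ℂ) := by
    intro n
    have := congrArg (fun f : ArithmeticFunction ℤ => ((f n : ℤ) : ℂ))
      ArithmeticFunction.moebius_mul_coe_zeta
    simp only [ArithmeticFunction.coe_mul_zeta_apply, ArithmeticFunction.one_apply] at this
    rw [show ((if n = 1 then (1:ℂ) else 0)) = (((if n = 1 then (1:ℤ) else 0) : ℤ) : ℂ) by split <;> simp,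
      ← this]
    push_cast
    rfl
  have step0 : gaussS (1 : DirichletCharacter ℂ q)
      = ∑ l ∈ Finset.range q, if Nat.gcd l q = 1 then ω l else 0 := by
    unfold gaussS
    refine Finset.sum_congr rfl fun l _ => ?_
    by_cases hu : IsUnit ((l : ℕ) : ZMod q)
    · rw [MulChar.one_apply hu, one_mul, if_pos ((ZMod.isUnit_iff_coprime l q).mp hu)]
    · rw [MulChar.map_nonunit _ hu, zero_mul, if_neg]
      intro hcop
      exact hu ((ZMod.isUnit_iff_coprime l q).mpr hcop)
  rw [step0]
  have step1 : ∑ l ∈ Finset.range q, (if Nat.gcd l q = 1 then ω l else 0)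
      = ∑ l ∈ Finset.range q, ∑ d ∈ q.divisors, (if d ∣ l then ((ArithmeticFunction.moebius d : ℤ) : ℂ) * ω l else 0) := by
    refine Finset.sum_congr rfl fun l _ => ?_
    rw [show (if Nat.gcd l q = 1 then ω l else 0) = (if Nat.gcd l q = 1 then (1:ℂ) else 0) * ω l by
      split <;> simp]
    rw [hmu (Nat.gcd l q), Finset.sum_mul]
    have hsets : (Nat.gcd l q).divisors = q.divisors.filter (· ∣ l) := by
      ext d
      simp only [Nat.mem_divisors, Finset.mem_filter, Nat.dvd_gcd_iff]
      constructor
      · rintro ⟨⟨h1, h2⟩, _⟩; exact ⟨⟨h2, hq0⟩, h1⟩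
      · rintro ⟨⟨h2, _⟩, h1⟩; exact ⟨⟨h1, h2⟩, Nat.gcd_ne_zero_right hq0⟩
    rw [hsets, Finset.sum_filter]
  rw [step1, Finset.sum_comm]
  have step2 : ∀ d ∈ q.divisors,
      ∑ l ∈ Finset.range q, (if d ∣ l then ((ArithmeticFunction.moebius d : ℤ) : ℂ) * ω l else 0)
        = ((ArithmeticFunction.moebius d : ℤ) : ℂ) * (if q / d = 1 then 1 else 0) := by
    intro d hd
    obtain ⟨hdvd, -⟩ := Nat.mem_divisors.mp hd
    have hd0 : 0 < d := Nat.pos_of_dvd_of_pos hdvd (Nat.pos_of_ne_zero hq0)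
    have himg : (Finset.range q).filter (d ∣ ·) = (Finset.range (q/d)).image (fun j => d * j) := by
      ext l
      simp only [Finset.mem_filter, Finset.mem_range, Finset.mem_image]
      constructor
      · rintro ⟨hlq, ⟨j, rfl⟩⟩
        exact ⟨j, by rwa [Nat.lt_div_iff_mul_lt' hdvd], rfl⟩
      · rintro ⟨j, hj, rfl⟩
        rw [Nat.lt_div_iff_mul_lt' hdvd] at hj
        exact ⟨hj, ⟨j, rfl⟩⟩
    rw [← Finset.sum_filter, himg, Finset.sum_image (fun a _ b _ hab =>
      Nat.eq_of_mul_eq_mul_left hd0 hab)]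
    have hpow : ∀ j : ℕ, ω (d * j) = (ω d) ^ j := by
      intro j
      rw [hω]
      simp only
      rw [← Complex.exp_nat_mul]
      congr 1
      push_cast
      ring
    simp only [hpow]
    rw [← Finset.mul_sum]
    congr 1
    by_cases hm : q / d = 1
    · rw [hm]; simp
    · rw [if_neg hm]
      have hm0 : 0 < q / d := Nat.div_pos (Nat.le_of_dvd (Nat.pos_of_ne_zero hq0) hdvd) hd0
      have hm1 : 1 < q / d := by omega
      have hdq : d < q := by
        have hqd := Nat.mul_div_cancel' hdvd
        nlinarith
      have hne1 : ω d ≠ 1 := by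
        intro heq
        rw [hω] at heq
        simp only at heq
        rw [Complex.exp_eq_one_iff] at heq
        obtain ⟨n, hn⟩ := heq
        have hq' : (q:ℂ) ≠ 0 := Nat.cast_ne_zero.mpr hq0
        have hpi : (2 * (Real.pi:ℂ) * I) ≠ 0 := by
          simp [Real.pi_ne_zero, Complex.I_ne_zero]
        have hdc : (d:ℂ) = (n:ℂ) * (q:ℂ) := by
          rw [div_eq_iff hq'] at hn
          exact mul_left_cancel₀ hpi (by linear_combination hn)
        have hdn : (d:ℤ) = n * q := by exact_mod_cast hdc
        have h1 : (0:ℤ) < (q:ℤ) := by exact_mod_cast Nat.pos_of_ne_zero hq0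
        have h2 : (0:ℤ) < (d:ℤ) := by exact_mod_cast hd0
        have h3 : (d:ℤ) < (q:ℤ) := by exact_mod_cast hdq
        rcases le_or_gt n 0 with hn0 | hn0
        · nlinarith
        · nlinarith
      have hroot : (ω d) ^ (q/d) = 1 := by
        rw [hω]
        simp only
        rw [← Complex.exp_nat_mul, show ((q/d : ℕ) : ℂ) * (2 * (Real.pi:ℂ) * I * (d:ℂ) / (q:ℂ))
            = 2 * (Real.pi:ℂ) * I * (((q/d) * d : ℕ) : ℂ) / (q:ℂ) by push_cast; ring,
          Nat.div_mul_cancel hdvd]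
        rw [show 2 * (Real.pi:ℂ) * I * (q:ℂ) / (q:ℂ) = ((1:ℤ):ℂ) * (2 * (Real.pi:ℂ) * I) by
          field_simp; norm_num]
        exact Complex.exp_int_mul_two_pi_mul_I 1
      rw [geom_sum_eq hne1, hroot]
      simp
  rw [Finset.sum_congr rfl step2]
  rw [Finset.sum_eq_single q]
  · rw [Nat.div_self (Nat.pos_of_ne_zero hq0), if_pos rfl, mul_one]
  · intro d hd hne
    obtain ⟨hdvd, -⟩ := Nat.mem_divisors.mp hd
    rw [if_neg, mul_zero]
    intro h1
    exact hne (by rw [← Nat.mul_div_cancel' hdvd, h1, mul_one])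
  · intro hq
    exact absurd (Nat.mem_divisors.mpr ⟨dvd_refl q, hq0⟩) hq

end StmtAux

namespace StmtAux
open Complex

lemma conj_char_eq_inv {q : ℕ} [NeZero q] (χ : DirichletCharacter ℂ q) {a : ZMod q}
    (ha : IsUnit a) : (starRingEnd ℂ) (χ a) = χ a⁻¹ := by
  have hmul : χ a⁻¹ * χ a = 1 := by
    rw [← map_mul, ZMod.inv_mul_of_unit a ha, map_one]
  have hnorm : ‖χ a‖ = 1 := χ.unit_norm_eq_one ha.unit
  have h2 : (starRingEnd ℂ) (χ a) * χ a = 1 := by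
    rw [mul_comm, Complex.mul_conj, Complex.normSq_eq_norm_sq,
      hnorm]
    norm_num
  exact mul_right_cancel₀ (fun h0 => by simp [h0] at hmul) (h2.trans hmul.symm)

lemma orth (q : ℕ) [NeZero q] {a : ZMod q} (ha : IsUnit a) :
    ∑ χ : DirichletCharacter ℂ q, gaussS χ * (starRingEnd ℂ) (χ a)
      = (q.totient : ℂ) * Complex.exp (2 * (Real.pi:ℂ) * I * ((a.val : ℕ) : ℂ) / (q:ℂ)) := by
  classical
  have step : ∀ χ : DirichletCharacter ℂ q, gaussS χ * (starRingEnd ℂ) (χ a)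
      = ∑ l ∈ Finset.range q, χ a⁻¹ * χ ((l : ℕ) : ZMod q)
          * Complex.exp (2 * (Real.pi:ℂ) * I * (l:ℂ) / (q:ℂ)) := by
    intro χ
    rw [conj_char_eq_inv χ ha, gaussS, Finset.sum_mul]
    refine Finset.sum_congr rfl fun l _ => ?_
    ring
  simp only [step]
  rw [Finset.sum_comm]
  have korth : ∀ l : ℕ, (∑ χ : DirichletCharacter ℂ q, χ a⁻¹ * χ ((l : ℕ) : ZMod q))
      = if a = ((l : ℕ) : ZMod q) then (q.totient : ℂ) else 0 :=
    fun l => DirichletCharacter.sum_char_inv_mul_char_eq ℂ ha _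
  have : ∀ l ∈ Finset.range q,
      (∑ χ : DirichletCharacter ℂ q, χ a⁻¹ * χ ((l : ℕ) : ZMod q)
          * Complex.exp (2 * (Real.pi:ℂ) * I * (l:ℂ) / (q:ℂ)))
      = (if a = ((l : ℕ) : ZMod q) then (q.totient : ℂ) else 0)
          * Complex.exp (2 * (Real.pi:ℂ) * I * (l:ℂ) / (q:ℂ)) := by
    intro l _
    rw [← korth l, Finset.sum_mul]
  rw [Finset.sum_congr rfl this, Finset.sum_eq_single a.val]
  · rw [if_pos (ZMod.natCast_rightInverse a).symm]
  · intro l hl hne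
    rw [if_neg, zero_mul]
    intro heq
    exact hne (by rw [heq, ZMod.val_cast_of_lt (Finset.mem_range.mp hl)])
  · intro hmem
    exact absurd (Finset.mem_range.mpr (ZMod.val_lt a)) hmem

end StmtAux

namespace StmtAux
open Complex

lemma isUnit_int_cast {q : ℕ} {h : ℤ} (hcop : IsCoprime h (q:ℤ)) : IsUnit ((h : ℤ) : ZMod q) := by
  obtain ⟨u, v, huv⟩ := hcop
  have : ((u : ZMod q)) * ((h : ZMod q)) = 1 := by
    have := congrArg (fun z : ℤ => (z : ZMod q)) huv
    push_cast at this
    simpa [ZMod.natCast_self] using this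
  exact IsUnit.of_mul_eq_one _ ((mul_comm ((h : ZMod q)) ((u : ZMod q))) ▸ this)

lemma key_pointwise (h : ℤ) (q : ℕ) [NeZero q] (hcop : IsCoprime h (q : ℤ))
    {p : ℕ} (hp : p.Prime) (hpq : ¬ p ∣ q) (m : ℕ) :
    (q.totient : ℂ) * Complex.exp (2 * (Real.pi:ℂ) * I * (h:ℂ) * ((p:ℂ)^m) / (q:ℂ))
      = (∑ χ ∈ Finset.univ.filter fun χ : DirichletCharacter ℂ q => χ ≠ 1,
          gaussS χ * (starRingEnd ℂ) (χ ((h : ZMod q))) * ((conjChar χ) ((p : ZMod q)))^m)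
        + ((ArithmeticFunction.moebius q : ℤ) : ℂ) := by
  classical
  have hh : IsUnit ((h : ℤ) : ZMod q) := isUnit_int_cast hcop
  have hpu : IsUnit ((p : ℕ) : ZMod q) := (ZMod.isUnit_prime_iff_not_dvd hp).mpr hpq
  set a : ZMod q := ((h : ℤ) : ZMod q) * ((p : ℕ) : ZMod q)^m with ha_def
  have ha : IsUnit a := hh.mul (hpu.pow m)
  -- LHS exponential equals exp over a.val
  have hLHS : Complex.exp (2 * (Real.pi:ℂ) * I * (h:ℂ) * ((p:ℂ)^m) / (q:ℂ))
      = Complex.exp (2 * (Real.pi:ℂ) * I * ((a.val : ℕ) : ℂ) / (q:ℂ)) := by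
    have h1 : Complex.exp (2 * (Real.pi:ℂ) * I * (h:ℂ) * ((p:ℂ)^m) / (q:ℂ))
        = Complex.exp (2 * (Real.pi:ℂ) * I * (((h * (p:ℤ)^m : ℤ)) : ℂ) / (q:ℂ)) := by
      congr 1
      push_cast
      ring
    rw [h1, exp_period q (h * (p:ℤ)^m)]
    congr 3
    rw [ha_def]
    push_cast
    rfl
  rw [hLHS, ← orth q ha]
  -- split the sum over all characters
  rw [← Finset.sum_filter_add_sum_filter_not Finset.univ (fun χ : DirichletCharacter ℂ q => χ ≠ 1)]
  congr 1
  · refine Finset.sum_congr rfl fun χ _ => ?_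
    rw [ha_def, map_mul, map_pow, map_mul (starRingEnd ℂ), map_pow (starRingEnd ℂ)]
    rw [show ((conjChar χ) ((p : ZMod q))) = (starRingEnd ℂ) (χ ((p : ZMod q))) from rfl]
    ring
  · rw [show (Finset.univ.filter fun χ : DirichletCharacter ℂ q => ¬ χ ≠ 1) = {(1 : DirichletCharacter ℂ q)} by
      ext χ; simp]
    rw [Finset.sum_singleton, MulChar.one_apply ha, map_one, mul_one, gaussS_one]

end StmtAux

namespace StmtAux
open Complex

lemma Apd_one : Apd 1 = 0 := by simp [Apd]

lemma Apd_mul {m n : ℕ} (hm : m ≠ 0) (hn : n ≠ 0) : Apd (m*n) = Apd m + Apd n := by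
  unfold Apd
  rw [Nat.factorization_mul hm hn]
  exact Finsupp.sum_add_index' (fun a => by simp) (fun a b c => by ring)

lemma Apd_prime {p : ℕ} (hp : p.Prime) : Apd p = p := by
  unfold Apd
  rw [hp.factorization]
  simp

lemma psiA_mul (h : ℤ) (q : ℕ) {m n : ℕ} (hm : m ≠ 0) (hn : n ≠ 0) :
    psiA h q (m*n) = psiA h q m * psiA h q n := by
  unfold psiA
  rw [Apd_mul hm hn, ← Complex.exp_add]
  congr 1
  push_cast
  ring

lemma norm_psiA (h : ℤ) (q : ℕ) (n : ℕ) : ‖psiA h q n‖ = 1 := by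
  unfold psiA
  rw [show 2 * (Real.pi:ℂ) * I * (h:ℂ) * ((Apd n : ℕ):ℂ) / (q:ℂ)
      = ((2 * Real.pi * (h:ℝ) * ((Apd n : ℕ):ℝ) / (q:ℝ) : ℝ) : ℂ) * I by push_cast; ring]
  exact norm_exp_real_mul_I _

/-- the completely multiplicative function `n ↦ ψ(n) n^{-s}` -/
noncomputable def Fhom (h : ℤ) (q : ℕ) (s : ℂ) (hs : s ≠ 0) : ℕ →*₀ ℂ where
  toFun n := psiA h q n / (n:ℂ)^s
  map_zero' := by
    show psiA h q 0 / ((0:ℕ):ℂ)^s = 0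
    rw [Nat.cast_zero, Complex.zero_cpow hs, div_zero]
  map_one' := by
    simp [psiA, Apd_one]
  map_mul' m n := by
    rcases eq_or_ne m 0 with rfl | hm
    · simp [Complex.zero_cpow hs]
    rcases eq_or_ne n 0 with rfl | hn
    · simp [Complex.zero_cpow hs]
    rw [psiA_mul h q hm hn]
    have hc : ((m*n : ℕ) : ℂ)^s = ((m:ℕ):ℂ)^s * ((n:ℕ):ℂ)^s := by
      have := mul_cpow_ofReal_nonneg (Nat.cast_nonneg m) (Nat.cast_nonneg n) s
      push_cast at this ⊢
      exact this
    rw [hc]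
    have h1 : ((m:ℕ):ℂ)^s ≠ 0 := by
      rw [Ne, Complex.cpow_eq_zero_iff, not_and_or]
      left; exact_mod_cast hm
    have h2 : ((n:ℕ):ℂ)^s ≠ 0 := by
      rw [Ne, Complex.cpow_eq_zero_iff, not_and_or]
      left; exact_mod_cast hn
    field_simp

lemma norm_Fhom {h : ℤ} {q : ℕ} {s : ℂ} (hs : s ≠ 0) {n : ℕ} (hn : 0 < n) :
    ‖Fhom h q s hs n‖ = (n:ℝ) ^ (-s.re) := by
  show ‖psiA h q n / (n:ℂ)^s‖ = _
  rw [norm_div, norm_psiA, Complex.norm_natCast_cpow_of_pos hn,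
    Real.rpow_neg (Nat.cast_nonneg n), one_div]

lemma summable_norm_Fhom {h : ℤ} {q : ℕ} {s : ℂ} (hσ : 1 < s.re) (hs : s ≠ 0) :
    Summable fun n => ‖Fhom h q s hs n‖ := by
  refine Summable.of_nonneg_of_le (fun n => norm_nonneg _) (fun n => ?_)
    (Real.summable_nat_rpow.mpr (show -s.re < -1 by linarith))
  rcases Nat.eq_zero_or_pos n with rfl | hn
  · simp [Real.zero_rpow (show -s.re ≠ 0 by intro hc; rw [neg_eq_zero] at hc; linarith)]
  · exact (norm_Fhom hs hn).le

lemma Lpsi_eq_exp (h : ℤ) (q : ℕ) (s : ℂ) (hσ : 1 < s.re) :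
    Lpsi h q s = Complex.exp (plogPsi h q s) := by
  have hs : s ≠ 0 := by
    intro hc
    rw [hc] at hσ
    simp only [Complex.zero_re] at hσ
    linarith
  rw [show Lpsi h q s = ∑' n : ℕ, Fhom h q s hs n from tsum_congr fun n => rfl,
    ← EulerProduct.exp_tsum_primes_log_eq_tsum (summable_norm_Fhom hσ hs)]
  congr 1
  rw [plogPsi]
  refine tsum_congr fun p => ?_
  have hp2 : 2 ≤ (p:ℕ) := p.prop.two_le
  have hz : ‖Fhom h q s hs (p:ℕ)‖ < 1 := by
    rw [norm_Fhom hs (by omega)]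
    calc ((p:ℕ):ℝ) ^ (-s.re) ≤ 1/2 := r_le_half hp2 hσ
      _ < 1 := by norm_num
  have hts := (hasSum_taylorSeries_neg_log hz).tsum_eq
  rw [← hts, Summable.tsum_eq_zero_add (hasSum_taylorSeries_neg_log hz).summable]
  rw [pow_zero, Nat.cast_zero, div_zero, zero_add]
  refine tsum_congr fun k => ?_
  -- now termwise
  have hψp : psiA h q (p:ℕ) = Complex.exp (2 * (Real.pi:ℂ) * I * (h:ℂ) * ((p:ℕ):ℂ) / (q:ℂ)) := by
    unfold psiA
    rw [Apd_prime p.prop]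
  show (psiA h q (p:ℕ) / ((p:ℕ):ℂ)^s)^(k+1) / ((k+1 : ℕ):ℂ) = _
  rw [hψp, div_pow, ← Complex.exp_nat_mul]
  have hpow : (((p:ℕ):ℂ)^s)^(k+1) = ((p:ℕ):ℂ)^(s*((k:ℂ)+1)) := by
    rw [show s*((k:ℂ)+1) = s * ((k+1 : ℕ):ℂ) by push_cast; ring, Complex.cpow_mul_nat]
  rw [hpow]
  have hne1 : ((p:ℕ):ℂ)^(s*((k:ℂ)+1)) ≠ 0 := by
    rw [Ne, Complex.cpow_eq_zero_iff, not_and_or]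
    left
    exact_mod_cast (show (p:ℕ) ≠ 0 by omega)
  have hne2 : ((k+1:ℕ):ℂ) ≠ 0 := Nat.cast_ne_zero.mpr (by omega)
  rw [div_div]
  congr 1
  · congr 1
    push_cast
    ring
  · push_cast
    ring

end StmtAux

namespace StmtAux
open Complex

lemma norm_term_le' {s : ℂ} {p : ℕ} (hp : 0 < p) (k : ℕ) {c : ℂ} {C : ℝ} (hc : ‖c‖ ≤ C) :
    ‖c / D s p k‖ ≤ C * ((p:ℝ) ^ (-s.re))^(k+1) := by
  have h1 : ‖(1:ℂ) / D s p k‖ ≤ ((p:ℝ) ^ (-s.re))^(k+1) := norm_term_le hp k (by simp)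
  calc ‖c / D s p k‖ = ‖c‖ * ‖(1:ℂ)/D s p k‖ := by
        rw [norm_div, norm_div, norm_one, one_div, div_eq_mul_inv]
    _ ≤ C * ((p:ℝ) ^ (-s.re))^(k+1) :=
        mul_le_mul hc h1 (norm_nonneg _) ((norm_nonneg c).trans hc)

lemma summable_term1 {s : ℂ} (hσ : 1 < s.re) {p : ℕ} (hp : 2 ≤ p) {c : ℕ → ℂ} {C : ℝ}
    (hc : ∀ k, ‖c k‖ ≤ C) : Summable (fun k => c k / D s p k) :=
  Summable.of_norm_bounded ((summable_geom hp hσ).mul_left C)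
    fun k => norm_term_le' (by omega) k (hc k)

lemma term2_bound {s : ℂ} (hσ : 1 < s.re) {p : ℕ} (hp : 2 ≤ p) {c : ℕ → ℂ} {C : ℝ}
    (hc : ∀ k, ‖c k‖ ≤ C) (k : ℕ) :
    ‖c k / D s p (k+1)‖ ≤ C * ((p:ℝ) ^ (-s.re))^(k+1) := by
  have hC0 : 0 ≤ C := (norm_nonneg (c 0)).trans (hc 0)
  have hr0 : 0 ≤ (p:ℝ) ^ (-s.re) := r_nonneg p s.re
  have hr1 : (p:ℝ) ^ (-s.re) ≤ 1 := (r_le_half hp hσ).trans (by norm_num)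
  refine (norm_term_le' (p := p) (s := s) (by omega) (k+1) (hc k)).trans ?_
  calc C * ((p:ℝ) ^ (-s.re))^(k+1+1) = (C * ((p:ℝ) ^ (-s.re))^(k+1)) * ((p:ℝ) ^ (-s.re)) := by ring
    _ ≤ (C * ((p:ℝ) ^ (-s.re))^(k+1)) * 1 := by
        exact mul_le_mul_of_nonneg_left hr1 (by positivity)
    _ = C * ((p:ℝ) ^ (-s.re))^(k+1) := mul_one _

lemma summable_term2 {s : ℂ} (hσ : 1 < s.re) {p : ℕ} (hp : 2 ≤ p) {c : ℕ → ℂ} {C : ℝ}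
    (hc : ∀ k, ‖c k‖ ≤ C) : Summable (fun k => c k / D s p (k+1)) :=
  Summable.of_norm_bounded ((summable_geom hp hσ).mul_left C) (term2_bound hσ hp hc)

lemma norm_tsum_le2 {s : ℂ} (hσ : 1 < s.re) {p : ℕ} (hp : 2 ≤ p) {c : ℕ → ℂ} {C : ℝ}
    (hc : ∀ k, ‖c k‖ ≤ C) : ‖∑' k, c k / D s p (k+1)‖ ≤ 2 * C * (p:ℝ) ^ (-s.re) := by
  have hC0 : 0 ≤ C := (norm_nonneg (c 0)).trans (hc 0)
  have hsn : Summable (fun k => ‖c k / D s p (k+1)‖) :=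
    Summable.of_nonneg_of_le (fun k => norm_nonneg _) (term2_bound hσ hp hc)
      ((summable_geom hp hσ).mul_left C)
  calc ‖∑' k, c k / D s p (k+1)‖ ≤ ∑' k, ‖c k / D s p (k+1)‖ := norm_tsum_le_tsum_norm hsn
    _ ≤ ∑' k : ℕ, C * ((p:ℝ) ^ (-s.re))^(k+1) :=
        Summable.tsum_le_tsum (term2_bound hσ hp hc) hsn ((summable_geom hp hσ).mul_left C)
    _ = C * ∑' k : ℕ, ((p:ℝ) ^ (-s.re))^(k+1) := tsum_mul_left
    _ ≤ C * (2 * (p:ℝ) ^ (-s.re)) := mul_le_mul_of_nonneg_left (tsum_geom_le hp hσ) hC0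
    _ = 2 * C * (p:ℝ) ^ (-s.re) := by ring

lemma norm_tsum_le' {s : ℂ} (hσ : 1 < s.re) {p : ℕ} (hp : 2 ≤ p) {c : ℕ → ℂ} {C : ℝ}
    (hc : ∀ k, ‖c k‖ ≤ C) : ‖∑' k, c k / D s p k‖ ≤ 2 * C * (p:ℝ) ^ (-s.re) := by
  have hC0 : 0 ≤ C := (norm_nonneg (c 0)).trans (hc 0)
  have hsn : Summable (fun k => ‖c k / D s p k‖) :=
    Summable.of_nonneg_of_le (fun k => norm_nonneg _)
      (fun k => norm_term_le' (by omega) k (hc k)) ((summable_geom hp hσ).mul_left C)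
  calc ‖∑' k, c k / D s p k‖ ≤ ∑' k, ‖c k / D s p k‖ := norm_tsum_le_tsum_norm hsn
    _ ≤ ∑' k : ℕ, C * ((p:ℝ) ^ (-s.re))^(k+1) :=
        Summable.tsum_le_tsum (fun k => norm_term_le' (by omega) k (hc k)) hsn
          ((summable_geom hp hσ).mul_left C)
    _ = C * ∑' k : ℕ, ((p:ℝ) ^ (-s.re))^(k+1) := tsum_mul_left
    _ ≤ C * (2 * (p:ℝ) ^ (-s.re)) := by
        exact mul_le_mul_of_nonneg_left (tsum_geom_le hp hσ) hC0
    _ = 2 * C * (p:ℝ) ^ (-s.re) := by ring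

lemma summable_primes' {s : ℂ} (hσ : 1 < s.re) {F : Nat.Primes → ℂ} {A : ℝ}
    (hF : ∀ p : Nat.Primes, ‖F p‖ ≤ A * ((p:ℕ):ℝ) ^ (-s.re)) : Summable F :=
  Summable.of_norm_bounded ((Nat.Primes.summable_rpow.2 (by linarith)).mul_left A) hF

lemma Dsucc (s : ℂ) (p : ℕ) (k : ℕ) :
    D s p (k+1) = ((k:ℂ)+2) * (p:ℂ)^(s*((k:ℂ)+2)) := by
  unfold D
  rw [show (((k+1:ℕ):ℂ)+1) = (k:ℂ)+2 by push_cast; ring]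

/-- numerator norms -/
lemma norm_cpsi (h : ℤ) (q : ℕ) (p : ℕ) (k : ℕ) :
    ‖Complex.exp (2*(Real.pi:ℂ)*I*(p:ℂ)*(h:ℂ)*((k:ℂ)+1)/(q:ℂ))‖ = 1 := by
  rw [show 2*(Real.pi:ℂ)*I*(p:ℂ)*(h:ℂ)*((k:ℂ)+1)/(q:ℂ)
      = ((2*Real.pi*(p:ℝ)*(h:ℝ)*((k:ℝ)+1)/(q:ℝ) : ℝ) : ℂ) * I by push_cast; ring]
  exact norm_exp_real_mul_I _

lemma norm_calt (h : ℤ) (q : ℕ) (p : ℕ) (k : ℕ) :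
    ‖Complex.exp (2*(Real.pi:ℂ)*I*(h:ℂ)*((p:ℂ)^(k+1))/(q:ℂ))‖ = 1 := by
  rw [show 2*(Real.pi:ℂ)*I*(h:ℂ)*((p:ℂ)^(k+1))/(q:ℂ)
      = ((2*Real.pi*(h:ℝ)*((p:ℝ)^(k+1))/(q:ℝ) : ℝ) : ℂ) * I by push_cast; ring]
  exact norm_exp_real_mul_I _

end StmtAux

namespace StmtAux
open Complex

/-- P0: split `∑ fψ = ∑ falt + ∑ fT` for any prime `p` -/
lemma P0 (h : ℤ) (q : ℕ) (s : ℂ) (hσ : 1 < s.re) {p : ℕ} (hp2 : 2 ≤ p) :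
    (∑' k : ℕ, Complex.exp (2*(Real.pi:ℂ)*I*(p:ℂ)*(h:ℂ)*((k:ℂ)+1)/(q:ℂ)) / D s p k)
      = (∑' k : ℕ, Complex.exp (2*(Real.pi:ℂ)*I*(h:ℂ)*((p:ℂ)^(k+1))/(q:ℂ)) / D s p k)
        + ∑' k : ℕ, (Complex.exp (2*(Real.pi:ℂ)*I*(p:ℂ)*(h:ℂ)*((k:ℂ)+2)/(q:ℂ))
            - Complex.exp (2*(Real.pi:ℂ)*I*((p:ℂ)^(k+2))*(h:ℂ)/(q:ℂ)))
            / (((k:ℂ)+2) * (p:ℂ)^(s*((k:ℂ)+2))) := by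
  set fψ : ℕ → ℂ := fun k => Complex.exp (2*(Real.pi:ℂ)*I*(p:ℂ)*(h:ℂ)*((k:ℂ)+1)/(q:ℂ)) / D s p k with hfψ
  set fa : ℕ → ℂ := fun k => Complex.exp (2*(Real.pi:ℂ)*I*(h:ℂ)*((p:ℂ)^(k+1))/(q:ℂ)) / D s p k with hfa
  have hsψ : Summable fψ := summable_term1 hσ hp2 (C := 1) (fun k => (norm_cpsi h q p k).le)
  have hsa : Summable fa := summable_term1 hσ hp2 (C := 1) (fun k => (norm_calt h q p k).le)
  have hsψ' : Summable (fun k => fψ (k+1)) := (summable_nat_add_iff 1).mpr hsψ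
  have hsa' : Summable (fun k => fa (k+1)) := (summable_nat_add_iff 1).mpr hsa
  have hT : ∑' k : ℕ, (Complex.exp (2*(Real.pi:ℂ)*I*(p:ℂ)*(h:ℂ)*((k:ℂ)+2)/(q:ℂ))
            - Complex.exp (2*(Real.pi:ℂ)*I*((p:ℂ)^(k+2))*(h:ℂ)/(q:ℂ)))
            / (((k:ℂ)+2) * (p:ℂ)^(s*((k:ℂ)+2)))
      = ∑' k : ℕ, (fψ (k+1) - fa (k+1)) := by
    refine tsum_congr fun k => ?_
    rw [hfψ, hfa]
    simp only
    rw [← Dsucc s p k, sub_div]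
    congr 2
    · congr 1; push_cast; ring
    · congr 1; push_cast; ring
  have h00 : fψ 0 = fa 0 := by
    rw [hfψ, hfa]
    simp only
    congr 2
    push_cast
    ring
  have e1 : ∑' k, fψ k = fψ 0 + ∑' k, fψ (k+1) := Summable.tsum_eq_zero_add hsψ
  have e2 : ∑' k, fa k = fa 0 + ∑' k, fa (k+1) := Summable.tsum_eq_zero_add hsa
  have e3 : ∑' k : ℕ, (fψ (k+1) - fa (k+1)) = (∑' k, fψ (k+1)) - ∑' k, fa (k+1) :=
    Summable.tsum_sub hsψ' hsa'
  rw [hT, e1, e2, e3, h00]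
  ring

/-- P2: for `p ∤ q`, expand `falt` over characters -/
lemma P2 (h : ℤ) (q : ℕ) [NeZero q] (hcop : IsCoprime h (q : ℤ)) (s : ℂ) (hσ : 1 < s.re)
    {p : ℕ} (hp : p.Prime) (hpq : ¬ p ∣ q) :
    (∑' k : ℕ, Complex.exp (2*(Real.pi:ℂ)*I*(h:ℂ)*((p:ℂ)^(k+1))/(q:ℂ)) / D s p k)
      = (∑ χ ∈ Finset.univ.filter fun χ : DirichletCharacter ℂ q => χ ≠ 1,
          (gaussS χ * (starRingEnd ℂ) (χ ((h : ZMod q))) / (q.totient : ℂ))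
            * ∑' k : ℕ, ((conjChar χ) ((p : ZMod q)))^(k+1) / D s p k)
        + ((ArithmeticFunction.moebius q : ℤ) : ℂ) / (q.totient : ℂ)
            * ∑' k : ℕ, 1 / D s p k := by
  classical
  have hp2 : 2 ≤ p := hp.two_le
  have hφ : ((q.totient : ℂ)) ≠ 0 := by
    exact_mod_cast (Nat.totient_pos.mpr (Nat.pos_of_ne_zero (NeZero.ne q))).ne'
  have hterm : ∀ k : ℕ,
      Complex.exp (2*(Real.pi:ℂ)*I*(h:ℂ)*((p:ℂ)^(k+1))/(q:ℂ)) / D s p k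
        = (∑ χ ∈ Finset.univ.filter fun χ : DirichletCharacter ℂ q => χ ≠ 1,
            (gaussS χ * (starRingEnd ℂ) (χ ((h : ZMod q))) / (q.totient : ℂ))
              * (((conjChar χ) ((p : ZMod q)))^(k+1) / D s p k))
          + ((ArithmeticFunction.moebius q : ℤ) : ℂ) / (q.totient : ℂ) * (1 / D s p k) := by
    intro k
    have hkey := key_pointwise h q hcop hp hpq (k+1)
    have hexp : Complex.exp (2*(Real.pi:ℂ)*I*(h:ℂ)*((p:ℂ)^(k+1))/(q:ℂ))
        = ((∑ χ ∈ Finset.univ.filter fun χ : DirichletCharacter ℂ q => χ ≠ 1,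
            gaussS χ * (starRingEnd ℂ) (χ ((h : ZMod q))) * ((conjChar χ) ((p : ZMod q)))^(k+1))
          + ((ArithmeticFunction.moebius q : ℤ) : ℂ)) / (q.totient : ℂ) := by
      rw [← hkey, mul_div_cancel_left₀ _ hφ]
    rw [hexp, div_div, add_div, Finset.sum_div]
    congr 1
    · refine Finset.sum_congr rfl fun χ _ => (div_mul_div_comm _ _ _ _).symm
    · rw [div_mul_div_comm, mul_one]
  rw [tsum_congr hterm]
  have hsχ : ∀ χ ∈ (Finset.univ.filter fun χ : DirichletCharacter ℂ q => χ ≠ 1),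
      Summable (fun k : ℕ =>
        (gaussS χ * (starRingEnd ℂ) (χ ((h : ZMod q))) / (q.totient : ℂ))
          * (((conjChar χ) ((p : ZMod q)))^(k+1) / D s p k)) := by
    intro χ _
    exact (summable_term1 hσ hp2 (C := 1) (fun k => by
      rw [norm_pow]
      exact pow_le_one₀ (norm_nonneg _) ((conjChar χ).norm_le_one _))).mul_left _
  have hsz : Summable (fun k : ℕ =>
      ((ArithmeticFunction.moebius q : ℤ) : ℂ) / (q.totient : ℂ) * (1 / D s p k)) :=
    (summable_term1 hσ hp2 (C := 1) (fun k => by rw [norm_one])).mul_left _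
  rw [Summable.tsum_add (summable_sum hsχ) hsz, Summable.tsum_finsetSum hsχ]
  congr 1
  · refine Finset.sum_congr rfl fun χ _ => ?_
    exact tsum_mul_left
  · exact tsum_mul_left

end StmtAux

namespace StmtAux
open Complex

lemma norm_calt2 (h : ℤ) (q : ℕ) (p : ℕ) (k : ℕ) :
    ‖Complex.exp (2*(Real.pi:ℂ)*I*((p:ℂ)^(k+2))*(h:ℂ)/(q:ℂ))‖ = 1 := by
  rw [show 2*(Real.pi:ℂ)*I*((p:ℂ)^(k+2))*(h:ℂ)/(q:ℂ)
      = ((2*Real.pi*((p:ℝ)^(k+2))*(h:ℝ)/(q:ℝ) : ℝ) : ℂ) * I by push_cast; ring]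
  exact norm_exp_real_mul_I _

set_option maxHeartbeats 1000000 in
lemma step2 (h : ℤ) (q : ℕ) [NeZero q] (hq : 2 < q) (hcop : IsCoprime h (q : ℤ))
    (s : ℂ) (hσ : 1 < s.re) :
    plogPsi h q s
      = (∑ χ ∈ Finset.univ.filter fun χ : DirichletCharacter ℂ q => χ ≠ 1,
          (gaussS χ * (starRingEnd ℂ) (χ ((h : ZMod q))) / (Nat.totient q : ℂ))
            * plogChar (conjChar χ) s)
        + ((ArithmeticFunction.moebius q : ℤ) : ℂ) / (Nat.totient q : ℂ) * plogZeta s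
        + Uhq h q s := by
  classical
  have hμφ : (((mphi q : ℝ)) : ℂ)
      = ((ArithmeticFunction.moebius q : ℤ) : ℂ) / (Nat.totient q : ℂ) := by
    rw [mphi]
    push_cast
    rfl
  set X : Nat.Primes → ℂ := fun p =>
    ∑ χ ∈ Finset.univ.filter fun χ : DirichletCharacter ℂ q => χ ≠ 1,
      (gaussS χ * (starRingEnd ℂ) (χ ((h : ZMod q))) / (Nat.totient q : ℂ)) *
        (∑' k : ℕ, ((conjChar χ) (((p:ℕ) : ZMod q)))^(k+1) / D s (p:ℕ) k) with hX
  set Y : Nat.Primes → ℂ := fun p =>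
    ((ArithmeticFunction.moebius q : ℤ) : ℂ) / (Nat.totient q : ℂ)
      * ∑' k : ℕ, 1 / D s (p:ℕ) k with hY
  set G : Nat.Primes → ℂ := fun p => if (p:ℕ) ∈ q.primeFactors then
      (-(((mphi q : ℝ)) : ℂ) * ∑' k : ℕ, 1 / D s (p:ℕ) k)
        + ∑' k : ℕ, Complex.exp (2*(Real.pi:ℂ)*I*(h:ℂ)*(((p:ℕ):ℂ)^(k+1))/(q:ℂ)) / D s (p:ℕ) k
    else 0 with hG
  set T : Nat.Primes → ℂ := fun p =>
    ∑' k : ℕ, (Complex.exp (2*(Real.pi:ℂ)*I*((p:ℕ):ℂ)*(h:ℂ)*((k:ℂ)+2)/(q:ℂ))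
        - Complex.exp (2*(Real.pi:ℂ)*I*(((p:ℕ):ℂ)^(k+2))*(h:ℂ)/(q:ℂ)))
        / (((k:ℂ)+2) * ((p:ℕ):ℂ)^(s*((k:ℂ)+2))) with hT
  -- per prime identity
  have hper : ∀ p : Nat.Primes,
      (∑' k : ℕ, Complex.exp (2*(Real.pi:ℂ)*I*((p:ℕ):ℂ)*(h:ℂ)*((k:ℂ)+1)/(q:ℂ)) / D s (p:ℕ) k)
        = X p + Y p + G p + T p := by
    intro p
    have hp2 : 2 ≤ (p:ℕ) := p.prop.two_le
    by_cases hmem : (p:ℕ) ∈ q.primeFactors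
    · have hdvd : (p:ℕ) ∣ q := Nat.dvd_of_mem_primeFactors hmem
      have hXz : X p = 0 := by
        simp only [hX]
        refine Finset.sum_eq_zero fun χ _ => ?_
        have hnu : ¬ IsUnit (((p:ℕ) : ZMod q)) :=
          fun hu => ((ZMod.isUnit_prime_iff_not_dvd p.prop).mp hu) hdvd
        have hz : (conjChar χ) (((p:ℕ) : ZMod q)) = 0 := MulChar.map_nonunit _ hnu
        have h0 : (∑' k : ℕ, ((conjChar χ) (((p:ℕ) : ZMod q)))^(k+1) / D s (p:ℕ) k)
            = ∑' k : ℕ, (0:ℂ) := tsum_congr fun k => by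
          rw [hz, zero_pow (Nat.succ_ne_zero k), zero_div]
        rw [h0, tsum_zero, mul_zero]
      rw [hXz]
      simp only [hY, hG, hT, if_pos hmem, hμφ]
      rw [P0 h q s hσ hp2]
      ring
    · have hpq : ¬ (p:ℕ) ∣ q := by
        intro hdvd
        exact hmem (Nat.mem_primeFactors.mpr ⟨p.prop, hdvd, NeZero.ne q⟩)
      simp only [hX, hY, hG, hT, if_neg hmem]
      rw [P0 h q s hσ hp2, P2 h q hcop s hσ p.prop hpq]
      ring
  -- summability of the pieces
  have hsχ' : ∀ χ : DirichletCharacter ℂ q, Summable (fun p : Nat.Primes =>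
      (gaussS χ * (starRingEnd ℂ) (χ ((h : ZMod q))) / (Nat.totient q : ℂ)) *
        (∑' k : ℕ, ((conjChar χ) (((p:ℕ) : ZMod q)))^(k+1) / D s (p:ℕ) k)) := by
    intro χ
    refine Summable.mul_left _ (summable_primes' hσ (A := 2) fun p => ?_)
    have := norm_tsum_le' (c := fun k => ((conjChar χ) (((p:ℕ) : ZMod q)))^(k+1)) (C := 1)
      hσ p.prop.two_le (fun k => by
        rw [norm_pow]
        exact pow_le_one₀ (norm_nonneg _) ((conjChar χ).norm_le_one _))
    simpa using this
  have hsX : Summable X := summable_sum fun χ _ => hsχ' χ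
  have hsY : Summable Y := by
    refine Summable.mul_left _ (summable_primes' hσ (A := 2) fun p => ?_)
    have := norm_tsum_le' (c := fun _ => (1:ℂ)) (C := 1) hσ p.prop.two_le (fun k => by simp)
    simpa using this
  -- the finite support of G
  set Pq : Finset Nat.Primes := q.primeFactors.attach.map
    ⟨fun x => (⟨x.1, Nat.prime_of_mem_primeFactors x.2⟩ : Nat.Primes),
      by intro a b hab; have h2 := congrArg Subtype.val hab; exact Subtype.ext h2⟩ with hPq
  have hmemPq : ∀ p : Nat.Primes, p ∈ Pq ↔ (p:ℕ) ∈ q.primeFactors := by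
    intro p
    rw [hPq, Finset.mem_map]
    constructor
    · rintro ⟨x, _, hx⟩
      rw [← hx]
      exact x.2
    · intro hmem; exact ⟨⟨(p:ℕ), hmem⟩, Finset.mem_attach _ _, Subtype.ext rfl⟩
  have hGz : ∀ p : Nat.Primes, p ∉ Pq → G p = 0 := by
    intro p hp
    simp only [hG]
    exact if_neg fun hmem => hp ((hmemPq p).mpr hmem)
  have hsG : Summable G := summable_of_ne_finset_zero (s := Pq) hGz
  have hsT : Summable T := by
    refine summable_primes' hσ (A := 4) fun p => ?_
    have hrw : T p = ∑' k : ℕ,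
        (Complex.exp (2*(Real.pi:ℂ)*I*((p:ℕ):ℂ)*(h:ℂ)*((k:ℂ)+2)/(q:ℂ))
          - Complex.exp (2*(Real.pi:ℂ)*I*(((p:ℕ):ℂ)^(k+2))*(h:ℂ)/(q:ℂ))) / D s (p:ℕ) (k+1) := by
      simp only [hT]
      exact tsum_congr fun k => by rw [Dsucc]
    rw [hrw]
    have := norm_tsum_le2 (c := fun k =>
        Complex.exp (2*(Real.pi:ℂ)*I*((p:ℕ):ℂ)*(h:ℂ)*((k:ℂ)+2)/(q:ℂ))
          - Complex.exp (2*(Real.pi:ℂ)*I*(((p:ℕ):ℂ)^(k+2))*(h:ℂ)/(q:ℂ))) (C := 2)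
      hσ p.prop.two_le (fun k => by
        refine (norm_sub_le _ _).trans ?_
        rw [show 2*(Real.pi:ℂ)*I*((p:ℕ):ℂ)*(h:ℂ)*((k:ℂ)+2)/(q:ℂ)
            = ((2*Real.pi*((p:ℕ):ℝ)*(h:ℝ)*((k:ℝ)+2)/(q:ℝ) : ℝ) : ℂ) * I by push_cast; ring,
          norm_exp_real_mul_I, norm_calt2]
        norm_num)
    calc ‖∑' k : ℕ, _ / D s (p:ℕ) (k+1)‖ ≤ 2 * 2 * ((p:ℕ):ℝ) ^ (-s.re) := this
      _ = 4 * ((p:ℕ):ℝ) ^ (-s.re) := by ring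
  -- assemble
  have hplog : plogPsi h q s = ∑' p : Nat.Primes, (X p + Y p + G p + T p) := by
    rw [plogPsi]
    exact tsum_congr hper
  rw [hplog, Summable.tsum_add ((hsX.add hsY).add hsG) hsT, Summable.tsum_add (hsX.add hsY) hsG,
    Summable.tsum_add hsX hsY]
  have hXsum : ∑' p : Nat.Primes, X p
      = ∑ χ ∈ Finset.univ.filter fun χ : DirichletCharacter ℂ q => χ ≠ 1,
          (gaussS χ * (starRingEnd ℂ) (χ ((h : ZMod q))) / (Nat.totient q : ℂ))
            * plogChar (conjChar χ) s := by
    simp only [hX]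
    rw [Summable.tsum_finsetSum fun χ _ => hsχ' χ]
    refine Finset.sum_congr rfl fun χ _ => ?_
    rw [tsum_mul_left]
    rfl
  have hYsum : ∑' p : Nat.Primes, Y p
      = ((ArithmeticFunction.moebius q : ℤ) : ℂ) / (Nat.totient q : ℂ) * plogZeta s := by
    simp only [hY]
    rw [tsum_mul_left]
    rfl
  have hGsum : (∑' p : Nat.Primes, G p) + (∑' p : Nat.Primes, T p) = Uhq h q s := by
    have h1 : ∑' p : Nat.Primes, G p = ∑ p ∈ Pq, G p := tsum_eq_sum hGz
    have h2 : ∑ p ∈ Pq, G p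
        = ∑ p ∈ q.primeFactors.attach,
            ((-(((mphi q : ℝ)) : ℂ) * ∑' k : ℕ, 1 / D s (p:ℕ) k)
              + ∑' k : ℕ, Complex.exp (2*(Real.pi:ℂ)*I*(h:ℂ)*(((p:ℕ):ℂ)^(k+1))/(q:ℂ)) / D s (p:ℕ) k) := by
      rw [hPq, Finset.sum_map]
      refine Finset.sum_congr rfl fun x _ => ?_
      simp only [hG, Function.Embedding.coeFn_mk]
      exact if_pos x.2
    rw [h1, h2, Finset.sum_add_distrib]
    rw [Uhq]
    simp only [hT]
    congr 1
    congr 1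
    · rw [← Finset.mul_sum, ← Finset.sum_attach q.primeFactors
        (fun p => ∑' k : ℕ, 1 / (((k:ℂ)+1) * (p:ℂ)^(s*((k:ℂ)+1))))]
      rw [neg_mul, ← neg_mul]
      rfl
    · rw [← Finset.sum_attach q.primeFactors
        (fun p => ∑' k : ℕ, Complex.exp (2*(Real.pi:ℂ)*I*(h:ℂ)*((p:ℂ)^(k+1))/(q:ℂ))
          / (((k:ℂ)+1) * (p:ℂ)^(s*((k:ℂ)+1))))]
      rfl
  rw [hXsum, hYsum, add_assoc, hGsum]

end StmtAux
theorem stmt8 (h : ℤ) (q : ℕ) [NeZero q] (hq : 2 < q) (hcop : IsCoprime h (q : ℤ))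
    (s : ℂ) (hs : 1 < s.re) :
    Lpsi h q s
      = (∏ χ ∈ Finset.univ.filter fun χ : DirichletCharacter ℂ q => χ ≠ 1,
            Complex.exp
              ((gaussS χ * (starRingEnd ℂ) (χ ((h : ZMod q))) / (Nat.totient q : ℂ))
                * plogChar (conjChar χ) s))
          * Complex.exp (((ArithmeticFunction.moebius q : ℂ) / (Nat.totient q : ℂ)) * plogZeta s)
          * Complex.exp (Uhq h q s) := by
  rw [StmtAux.Lpsi_eq_exp h q s hs, StmtAux.step2 h q hq hcop s hs,
    Complex.exp_add, Complex.exp_add, Complex.exp_sum]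
end

section
/- For $\Re(s) > 1$ and coprime integers $h, q$ with $q > 2$, the logarithm of $L(s,\psi_{h/q})$ satisfies $\log L(s, \psi_{h/q}) = \frac{1}{\phi(q)} \sum_{\chi \bmod q,\ \chi \ne \chi_0} \tau(\chi)\,\overline{\chi(h)}\, \log L(s, \overline{\chi}) + \frac{\mu(q)}{\phi(q)} \log \zeta(s) - \frac{\mu(q)}{\phi(q)} \sum_{p \mid q}\sum_{k=1}^\infty \frac{1}{k p^{sk}} + \sum_{p \mid q}\sum_{k=1}^\infty \frac{e^{2\pi i h p^k/q}}{k\, p^{sk}} + \sum_{p}\sum_{k=2}^\infty \frac{e^{2\pi i p h k/q} - e^{2\pi i p^k h/q}}{k\, p^{sk}}$, where all logarithms are given by the absolutely convergent prime-power sums $\log L(s,\chi) = \sum_p \sum_{k \ge 1} \chi(p)^k/(k p^{sk})$ and $\log \zeta(s) = \sum_p \sum_{k \ge 1} 1/(k p^{sk})$. -/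
open Complex Finset Filter Asymptotics intervalIntegral
open scoped Real Topology Classical

private lemma norm_exp_I_real (x : ℂ) (w : ℝ) (hx : x = (w:ℂ) * Complex.I) :
    ‖Complex.exp x‖ = 1 := by rw [hx]; exact Complex.norm_exp_ofReal_mul_I w

private lemma term_norm_le {s : ℂ} (hs : 1 < s.re) (P : ℕ) (hP : 2 ≤ P) (k : ℕ) (num : ℂ)
    {B : ℝ} (hnum : ‖num‖ ≤ B) :
    ‖num / (((k:ℂ)+1) * ((P:ℕ):ℂ) ^ (s*((k:ℂ)+1)))‖ ≤ B * (((P:ℝ)) ^ (-s.re)) ^ (k+1) := by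
  have hP0 : (0:ℝ) < (P:ℝ) := by exact_mod_cast lt_of_lt_of_le two_pos hP
  have hB0 : 0 ≤ B := le_trans (norm_nonneg _) hnum
  have hre : (s*((k:ℂ)+1)).re = s.re * ((k:ℝ)+1) := by simp [Complex.mul_re]
  have hden : ‖(((k:ℂ)+1) * ((P:ℕ):ℂ) ^ (s*((k:ℂ)+1)))‖
      = ((k:ℝ)+1) * (P:ℝ) ^ (s.re*((k:ℝ)+1)) := by
    rw [norm_mul]
    congr 1
    · rw [show ((k:ℂ)+1) = ((k+1:ℕ):ℂ) by push_cast; ring, Complex.norm_natCast]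
      push_cast; ring
    · rw [show ((P:ℕ):ℂ) = (((P:ℝ)):ℂ) by norm_cast,
        Complex.norm_cpow_eq_rpow_re_of_pos hP0, hre]
  have h1 : (P:ℝ) ^ (s.re*((k:ℝ)+1)) = ((P:ℝ)^s.re)^(k+1) := by
    rw [show s.re*((k:ℝ)+1) = s.re * ((k+1 : ℕ):ℝ) by push_cast; ring,
      Real.rpow_mul hP0.le, Real.rpow_natCast]
  have h2 : ((P:ℝ)^(-s.re))^(k+1) = (((P:ℝ)^s.re)^(k+1))⁻¹ := by
    rw [Real.rpow_neg hP0.le, inv_pow]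
  have hpow : (0:ℝ) < ((P:ℝ)^s.re)^(k+1) := by positivity
  rw [norm_div, hden, h1, h2, ← div_eq_mul_inv]
  exact div_le_div₀ hB0 hnum hpow (le_mul_of_one_le_left hpow.le (le_add_of_nonneg_left (Nat.cast_nonneg k)))

private lemma summable_geom_bound {F : ℕ → ℂ} {B rr : ℝ} (hr0 : 0 ≤ rr) (hr1 : rr < 1)
    (hF : ∀ k, ‖F k‖ ≤ B * rr ^ (k+1)) : Summable F := by
  refine Summable.of_norm_bounded
    ((summable_geometric_of_lt_one hr0 hr1).mul_left (B*rr)) (fun k => ?_)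
  calc ‖F k‖ ≤ B * rr^(k+1) := hF k
  _ = (B*rr)*rr^k := by ring

private lemma norm_tsum_geom {F : ℕ → ℂ} {B rr : ℝ} (hr0 : 0 ≤ rr) (hr2 : rr ≤ 2⁻¹)
    (hB : 0 ≤ B) (hF : ∀ k, ‖F k‖ ≤ B * rr ^ (k+1)) : ‖∑' k, F k‖ ≤ 2 * B * rr := by
  have hr1 : rr < 1 := lt_of_le_of_lt hr2 (by norm_num)
  have hsum : Summable (fun k : ℕ => B * rr^(k+1)) := by
    refine ((summable_geometric_of_lt_one hr0 hr1).mul_left (B*rr)).congr fun k => by ring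
  have hnorm : Summable (fun k => ‖F k‖) :=
    hsum.of_nonneg_of_le (fun k => norm_nonneg _) hF
  calc ‖∑' k, F k‖ ≤ ∑' k, ‖F k‖ := norm_tsum_le_tsum_norm hnorm
  _ ≤ ∑' k, B * rr^(k+1) := Summable.tsum_le_tsum hF hnorm hsum
  _ = (B*rr) * ∑' k : ℕ, rr^k := by rw [← tsum_mul_left]; exact tsum_congr fun k => by ring
  _ = (B*rr) * (1-rr)⁻¹ := by rw [tsum_geometric_of_lt_one hr0 hr1]
  _ ≤ (B*rr) * 2 := by
      have h2 : (1-rr)⁻¹ ≤ 2 := by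
        rw [show (2:ℝ) = (2⁻¹)⁻¹ by norm_num]
        exact inv_anti₀ (by norm_num) (by linarith)
      exact mul_le_mul_of_nonneg_left h2 (by positivity)
  _ = 2*B*rr := by ring

private lemma rP_pos {σ : ℝ} (p : Nat.Primes) : 0 < ((p:ℕ):ℝ) ^ (-σ) :=
  Real.rpow_pos_of_pos (by exact_mod_cast p.2.pos) _

private lemma rP_le_half {σ : ℝ} (hσ : 1 < σ) (p : Nat.Primes) : ((p:ℕ):ℝ) ^ (-σ) ≤ 2⁻¹ := by
  have hp2 : (2:ℝ) ≤ ((p:ℕ):ℝ) := by exact_mod_cast p.2.two_le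
  have h2σ : (2:ℝ) ≤ ((p:ℕ):ℝ) ^ σ := by
    calc (2:ℝ) = (2:ℝ)^(1:ℝ) := (Real.rpow_one 2).symm
    _ ≤ (2:ℝ)^σ := Real.rpow_le_rpow_of_exponent_le one_le_two hσ.le
    _ ≤ ((p:ℕ):ℝ)^σ := Real.rpow_le_rpow (by norm_num) hp2 (by linarith)
  rw [Real.rpow_neg (by linarith)]
  exact inv_anti₀ (by norm_num) h2σ

private lemma rP_lt_one {σ : ℝ} (hσ : 1 < σ) (p : Nat.Primes) : ((p:ℕ):ℝ) ^ (-σ) < 1 :=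
  lt_of_le_of_lt (rP_le_half hσ p) (by norm_num)

private lemma summable_outer {s : ℂ} (hs : 1 < s.re) {B : ℝ} (hB : 0 ≤ B)
    {F : Nat.Primes → ℕ → ℂ}
    (hF : ∀ p k, ‖F p k‖ ≤ B * (((p:ℕ):ℝ) ^ (-s.re)) ^ (k+1)) :
    Summable fun p : Nat.Primes => ∑' k, F p k := by
  refine Summable.of_norm_bounded
    ((Nat.Primes.summable_rpow.mpr (by linarith) :
      Summable fun p : Nat.Primes => ((p:ℕ):ℝ)^(-s.re)).mul_left (2*B)) (fun p => ?_)
  exact norm_tsum_geom (rP_pos p).le (rP_le_half hs p) hB (hF p)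

section AuxArith

private lemma exp_periodic {q : ℕ} (hq : q ≠ 0) (x : ℤ) :
    Complex.exp (2*(Real.pi:ℂ)*Complex.I*(x:ℂ)/(q:ℂ))
      = Complex.exp (2*(Real.pi:ℂ)*Complex.I*(((x : ZMod q).val : ℕ):ℂ)/(q:ℂ)) := by
  haveI : NeZero q := ⟨hq⟩
  set v : ℕ := (x : ZMod q).val with hv
  have hvx : ((v:ℤ) : ZMod q) = (x : ZMod q) := by
    push_cast
    rw [hv, ZMod.natCast_val, ZMod.cast_id]
  have hdvd : (q:ℤ) ∣ x - (v:ℤ) := Int.ModEq.dvd ((ZMod.intCast_eq_intCast_iff _ _ _).mp hvx)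
  obtain ⟨t, ht⟩ := hdvd
  have hx : (x:ℂ) = (v:ℂ) + (q:ℂ)*(t:ℂ) := by
    have hxe : x = (v:ℤ) + (q:ℤ)*t := by linarith
    exact_mod_cast congrArg (Int.cast : ℤ → ℂ) hxe
  have hq' : (q:ℂ) ≠ 0 := Nat.cast_ne_zero.mpr hq
  rw [show 2*(Real.pi:ℂ)*Complex.I*(x:ℂ)/(q:ℂ)
      = 2*(Real.pi:ℂ)*Complex.I*(v:ℂ)/(q:ℂ) + (t:ℂ) * (2*(Real.pi:ℂ)*Complex.I) by
    rw [hx]; field_simp]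
  rw [Complex.exp_add, Complex.exp_int_mul_two_pi_mul_I, mul_one]

private lemma conj_char_apply {q : ℕ} (χ : DirichletCharacter ℂ q) {a : ZMod q}
    (ha : IsUnit a) : (starRingEnd ℂ) (χ a) = χ a⁻¹ := by
  have h1 : χ a * χ a⁻¹ = 1 := by
    rw [← map_mul, ZMod.mul_inv_of_unit a ha, map_one]
  have habs : ‖χ a‖ = 1 := by
    rw [show a = ((ha.unit : (ZMod q)ˣ) : ZMod q) by rw [IsUnit.unit_spec]]
    exact χ.unit_norm_eq_one ha.unit
  have h3 : (starRingEnd ℂ) (χ a) * χ a = 1 := by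
    rw [mul_comm, Complex.mul_conj, Complex.normSq_eq_norm_sq, habs]
    norm_num
  calc (starRingEnd ℂ) (χ a) = (starRingEnd ℂ) (χ a) * (χ a * χ a⁻¹) := by rw [h1, mul_one]
  _ = ((starRingEnd ℂ) (χ a) * χ a) * χ a⁻¹ := by ring
  _ = χ a⁻¹ := by rw [h3, one_mul]

private lemma gauss_orth {q : ℕ} [NeZero q] {a : ZMod q} (ha : IsUnit a) :
    ∑ χ : DirichletCharacter ℂ q, gaussS χ * (starRingEnd ℂ) (χ a)
      = (q.totient : ℂ) * Complex.exp (2*(Real.pi:ℂ)*Complex.I*((a.val : ℕ):ℂ)/(q:ℂ)) := by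
  haveI : NeZero (Monoid.exponent (ZMod q)ˣ) := ⟨Monoid.exponent_ne_zero_of_finite⟩
  calc ∑ χ : DirichletCharacter ℂ q, gaussS χ * (starRingEnd ℂ) (χ a)
      = ∑ χ : DirichletCharacter ℂ q, ∑ l ∈ Finset.range q,
          χ a⁻¹ * χ (l : ZMod q) * Complex.exp (2*(Real.pi:ℂ)*Complex.I*(l:ℂ)/(q:ℂ)) := by
        refine Finset.sum_congr rfl fun χ _ => ?_
        rw [conj_char_apply χ ha, gaussS, Finset.sum_mul]
        exact Finset.sum_congr rfl fun l _ => by ring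
  _ = ∑ l ∈ Finset.range q, (∑ χ : DirichletCharacter ℂ q, χ a⁻¹ * χ (l : ZMod q))
        * Complex.exp (2*(Real.pi:ℂ)*Complex.I*(l:ℂ)/(q:ℂ)) := by
        rw [Finset.sum_comm]
        exact Finset.sum_congr rfl fun l _ => by rw [Finset.sum_mul]
  _ = ∑ l ∈ Finset.range q, (if a = (l : ZMod q) then (q.totient : ℂ) else 0)
        * Complex.exp (2*(Real.pi:ℂ)*Complex.I*(l:ℂ)/(q:ℂ)) := by
        refine Finset.sum_congr rfl fun l _ => ?_
        rw [DirichletCharacter.sum_char_inv_mul_char_eq ℂ ha (l : ZMod q)]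
  _ = (q.totient : ℂ) * Complex.exp (2*(Real.pi:ℂ)*Complex.I*((a.val : ℕ):ℂ)/(q:ℂ)) := by
        rw [Finset.sum_eq_single a.val]
        · rw [if_pos]
          rw [ZMod.natCast_val, ZMod.cast_id]
        · intro l hl hne
          rw [if_neg, zero_mul]
          intro hal
          exact hne (by rw [hal]; exact (ZMod.val_cast_of_lt (Finset.mem_range.mp hl)).symm)
        · intro hmem
          exact absurd (Finset.mem_range.mpr (ZMod.val_lt a)) hmem

private lemma sum_exp_eq_zero {Q : ℕ} (hQ : 1 < Q) :
    ∑ m ∈ Finset.range Q, Complex.exp (2*(Real.pi:ℂ)*Complex.I*(m:ℂ)/(Q:ℂ)) = 0 := by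
  have hQ0 : (Q:ℂ) ≠ 0 := Nat.cast_ne_zero.mpr (by omega)
  set z : ℂ := Complex.exp (2*(Real.pi:ℂ)*Complex.I/(Q:ℂ)) with hz
  have hzm : ∀ m : ℕ, Complex.exp (2*(Real.pi:ℂ)*Complex.I*(m:ℂ)/(Q:ℂ)) = z ^ m := by
    intro m
    rw [hz, ← Complex.exp_nat_mul]
    congr 1
    ring
  have hzQ : z ^ Q = 1 := by
    rw [hz, ← Complex.exp_nat_mul]
    rw [show (Q:ℂ) * (2*(Real.pi:ℂ)*Complex.I/(Q:ℂ)) = 2*(Real.pi:ℂ)*Complex.I by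
      field_simp]
    exact Complex.exp_two_pi_mul_I
  have hz1 : z ≠ 1 := by
    intro hz1
    obtain ⟨n, hn⟩ := Complex.exp_eq_one_iff.mp (hz ▸ hz1)
    have h2pi : (2*(Real.pi:ℂ)*Complex.I) ≠ 0 :=
      mul_ne_zero (mul_ne_zero two_ne_zero (Complex.ofReal_ne_zero.mpr Real.pi_ne_zero))
        Complex.I_ne_zero
    have hnq : (n:ℂ) * (Q:ℂ) = 1 := by
      have h1 : (2*(Real.pi:ℂ)*Complex.I) * 1 = (2*(Real.pi:ℂ)*Complex.I) * ((n:ℂ) * (Q:ℂ)) := by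
        rw [mul_one]
        calc 2*(Real.pi:ℂ)*Complex.I = (2*(Real.pi:ℂ)*Complex.I/(Q:ℂ)) * (Q:ℂ) := by
              field_simp
        _ = ((n:ℂ) * (2*(Real.pi:ℂ)*Complex.I)) * (Q:ℂ) := by rw [hn]
        _ = (2*(Real.pi:ℂ)*Complex.I) * ((n:ℂ) * (Q:ℂ)) := by ring
      exact (mul_left_cancel₀ h2pi h1).symm
    have : (n * (Q:ℤ) : ℤ) = 1 := by exact_mod_cast hnq
    have : (Q:ℤ) ∣ 1 := Dvd.intro_left n this
    have := Int.le_of_dvd one_pos this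
    omega
  rw [Finset.sum_congr rfl fun m _ => hzm m, geom_sum_eq hz1, hzQ, sub_self, zero_div]

end AuxArith


section AuxArith2

private lemma moebius_divisors_sum (n : ℕ) :
    ∑ d ∈ n.divisors, ((ArithmeticFunction.moebius d : ℤ) : ℂ) = if n = 1 then 1 else 0 := by
  have h1 : ((ArithmeticFunction.moebius * ArithmeticFunction.zeta :
      ArithmeticFunction ℤ) : ArithmeticFunction ℤ) n = (1 : ArithmeticFunction ℤ) n := by
    rw [ArithmeticFunction.moebius_mul_coe_zeta]
  rw [ArithmeticFunction.coe_mul_zeta_apply, ArithmeticFunction.one_apply] at h1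
  have : ((∑ d ∈ n.divisors, ArithmeticFunction.moebius d : ℤ) : ℂ)
      = ((if n = 1 then (1:ℤ) else 0 : ℤ) : ℂ) := by exact_mod_cast congrArg (Int.cast : ℤ → ℂ) h1
  rw [Int.cast_sum] at this
  simpa using this

private lemma inner_exp_sum {q d : ℕ} (hq : q ≠ 0) (hd : d ∣ q) :
    ∑ l ∈ (Finset.range q).filter (d ∣ ·),
        Complex.exp (2*(Real.pi:ℂ)*Complex.I*(l:ℂ)/(q:ℂ))
      = if q / d = 1 then 1 else 0 := by
  have hd0 : d ≠ 0 := by rintro rfl; simp at hd; omega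
  have hQ0 : q / d ≠ 0 := by
    have := Nat.div_pos (Nat.le_of_dvd (by omega) hd) (by omega)
    omega
  have hqd : d * (q / d) = q := Nat.mul_div_cancel' hd
  have hreindex : ∑ l ∈ (Finset.range q).filter (d ∣ ·),
      Complex.exp (2*(Real.pi:ℂ)*Complex.I*(l:ℂ)/(q:ℂ))
      = ∑ m ∈ Finset.range (q / d),
          Complex.exp (2*(Real.pi:ℂ)*Complex.I*(m:ℂ)/((q/d : ℕ):ℂ)) := by
    refine (Finset.sum_nbij' (fun l => l / d) (fun m => d * m) ?_ ?_ ?_ ?_ ?_)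
    · intro l hl
      obtain ⟨hlq, hdl⟩ := Finset.mem_filter.mp hl
      exact Finset.mem_range.mpr (Nat.div_lt_div_of_lt_of_dvd hd (Finset.mem_range.mp hlq))
    · intro m hm
      refine Finset.mem_filter.mpr ⟨Finset.mem_range.mpr ?_, Dvd.intro m rfl⟩
      calc d * m < d * (q/d) := (mul_lt_mul_iff_right₀ (show 0 < d by omega)).mpr
            (Finset.mem_range.mp hm)
      _ = q := hqd
    · intro l hl
      show d * (l / d) = l
      exact Nat.mul_div_cancel' (Finset.mem_filter.mp hl).2
    · intro m _
      show d * m / d = m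
      exact Nat.mul_div_cancel_left m (by omega)
    · intro l hl
      obtain ⟨hlq, hdl⟩ := Finset.mem_filter.mp hl
      show Complex.exp _ = Complex.exp _
      congr 1
      obtain ⟨c, rfl⟩ := hdl
      show (2*(Real.pi:ℂ)*Complex.I*((d*c : ℕ):ℂ)/(q:ℂ))
          = 2*(Real.pi:ℂ)*Complex.I*((d*c/d : ℕ):ℂ)/((q/d : ℕ):ℂ)
      rw [show d * c / d = c from Nat.mul_div_cancel_left c (by omega)]
      have hqC : (q:ℂ) = (d:ℂ) * ((q/d : ℕ):ℂ) := by exact_mod_cast hqd.symm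
      have hdC : (d:ℂ) ≠ 0 := Nat.cast_ne_zero.mpr hd0
      have hQC : ((q/d : ℕ):ℂ) ≠ 0 := Nat.cast_ne_zero.mpr hQ0
      rw [hqC]
      push_cast
      field_simp
  rw [hreindex]
  by_cases hQ1 : q / d = 1
  · rw [if_pos hQ1, hQ1]
    simp
  · rw [if_neg hQ1]
    exact sum_exp_eq_zero (lt_of_le_of_ne (Nat.one_le_iff_ne_zero.mpr hQ0) (Ne.symm hQ1))

private lemma gaussS_one {q : ℕ} (hq : q ≠ 0) :
    gaussS (1 : DirichletCharacter ℂ q) = ((ArithmeticFunction.moebius q : ℤ) : ℂ) := by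
  have step1 : gaussS (1 : DirichletCharacter ℂ q)
      = ∑ l ∈ Finset.range q, (∑ d ∈ (Nat.gcd l q).divisors,
          ((ArithmeticFunction.moebius d : ℤ) : ℂ))
            * Complex.exp (2*(Real.pi:ℂ)*Complex.I*(l:ℂ)/(q:ℂ)) := by
    rw [gaussS]
    refine Finset.sum_congr rfl fun l _ => ?_
    congr 1
    rw [moebius_divisors_sum]
    by_cases hu : IsUnit ((l : ZMod q))
    · rw [if_pos (Nat.Coprime.gcd_eq_one ((ZMod.isUnit_iff_coprime l q).mp hu))]
      exact MulChar.one_apply hu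
    · rw [if_neg]
      · exact MulChar.map_nonunit _ hu
      · intro hg
        exact hu ((ZMod.isUnit_iff_coprime l q).mpr hg)
  have hdivs : ∀ l : ℕ, (Nat.gcd l q).divisors = q.divisors.filter (· ∣ l) := by
    intro l
    ext d
    simp only [Nat.mem_divisors, Finset.mem_filter, Nat.dvd_gcd_iff]
    constructor
    · rintro ⟨⟨h1, h2⟩, -⟩
      exact ⟨⟨h2, hq⟩, h1⟩
    · rintro ⟨⟨h2, -⟩, h1⟩
      exact ⟨⟨h1, h2⟩, fun hg => hq ((Nat.gcd_eq_zero_iff.mp hg).2)⟩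
  rw [step1]
  have step2 : ∑ l ∈ Finset.range q, (∑ d ∈ (Nat.gcd l q).divisors,
      ((ArithmeticFunction.moebius d : ℤ) : ℂ))
        * Complex.exp (2*(Real.pi:ℂ)*Complex.I*(l:ℂ)/(q:ℂ))
      = ∑ d ∈ q.divisors, ((ArithmeticFunction.moebius d : ℤ) : ℂ)
          * ∑ l ∈ (Finset.range q).filter (d ∣ ·),
              Complex.exp (2*(Real.pi:ℂ)*Complex.I*(l:ℂ)/(q:ℂ)) := by
    have hl : ∀ l ∈ Finset.range q, (∑ d ∈ (Nat.gcd l q).divisors,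
        ((ArithmeticFunction.moebius d : ℤ) : ℂ))
          * Complex.exp (2*(Real.pi:ℂ)*Complex.I*(l:ℂ)/(q:ℂ))
        = ∑ d ∈ q.divisors, (if d ∣ l then ((ArithmeticFunction.moebius d : ℤ) : ℂ)
            * Complex.exp (2*(Real.pi:ℂ)*Complex.I*(l:ℂ)/(q:ℂ)) else 0) := by
      intro l _
      rw [hdivs l, Finset.sum_filter, Finset.sum_mul]
      refine Finset.sum_congr rfl fun d _ => ?_
      split_ifs <;> simp
    rw [Finset.sum_congr rfl hl, Finset.sum_comm]
    refine Finset.sum_congr rfl fun d _ => ?_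
    rw [Finset.mul_sum, Finset.sum_filter]
  rw [step2]
  rw [Finset.sum_congr rfl (fun d hd =>
    by rw [inner_exp_sum hq (Nat.mem_divisors.mp hd).1])]
  rw [Finset.sum_eq_single_of_mem q (Nat.mem_divisors_self q hq)]
  · rw [Nat.div_self (by omega), if_pos rfl, mul_one]
  · intro d hd hne
    rw [if_neg, mul_zero]
    intro h1
    exact hne (by
      have := (Nat.mem_divisors.mp hd).1
      have h2 := Nat.mul_div_cancel' this
      rw [h1, mul_one] at h2
      omega)

private def Pfin (q : ℕ) : Finset Nat.Primes :=
  q.primeFactors.attach.map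
    (⟨fun x => (⟨x.1, Nat.prime_of_mem_primeFactors x.2⟩ : Nat.Primes),
      fun a b hab => Subtype.ext (congrArg (fun y : Nat.Primes => (y:ℕ)) hab)⟩ :
      {x // x ∈ q.primeFactors} ↪ Nat.Primes)

private lemma mem_Pfin {q : ℕ} {x : Nat.Primes} : x ∈ Pfin q ↔ (x:ℕ) ∈ q.primeFactors := by
  constructor
  · intro hx
    obtain ⟨a, -, rfl⟩ := Finset.mem_map.mp hx
    exact a.2
  · intro hx
    exact Finset.mem_map.mpr ⟨⟨(x:ℕ), hx⟩, Finset.mem_attach _ _, Subtype.ext rfl⟩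

private lemma sum_Pfin {q : ℕ} (f : Nat.Primes → ℂ) (g : ℕ → ℂ)
    (hfg : ∀ x : Nat.Primes, f x = g (x:ℕ)) :
    ∑ x ∈ Pfin q, f x = ∑ p ∈ q.primeFactors, g p := by
  rw [Pfin, Finset.sum_map]
  refine Eq.trans (Finset.sum_congr rfl fun a _ => hfg _) (Finset.sum_attach _ _)

private lemma compl_Pfin {q : ℕ} (hq : q ≠ 0) :
    (↑(Pfin q) : Set Nat.Primes)ᶜ = {x : Nat.Primes | ¬ (x:ℕ) ∣ q} := by
  ext x
  simp [mem_Pfin, Nat.mem_primeFactors, x.2, hq]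

private lemma isUnit_int_cast {h : ℤ} {q : ℕ} (hcop : IsCoprime h (q:ℤ)) :
    IsUnit ((h : ZMod q)) := by
  obtain ⟨u, v, huv⟩ := hcop
  have hmap := congrArg (fun z : ℤ => (z : ZMod q)) huv
  push_cast at hmap
  rw [ZMod.natCast_self, mul_zero, add_zero] at hmap
  exact IsUnit.of_mul_eq_one _ (by rw [mul_comm]; exact hmap)

end AuxArith2


section Families

private noncomputable def Fpsi (h : ℤ) (q : ℕ) (s : ℂ) (p : Nat.Primes) (k : ℕ) : ℂ :=
  Complex.exp (2 * (Real.pi : ℂ) * Complex.I * ((p : ℕ) : ℂ) * (h : ℂ) * ((k : ℂ) + 1) / (q : ℂ))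
    / (((k : ℂ) + 1) * ((p : ℕ) : ℂ) ^ (s * ((k : ℂ) + 1)))

private noncomputable def FaltF (h : ℤ) (q : ℕ) (s : ℂ) (p : Nat.Primes) (k : ℕ) : ℂ :=
  Complex.exp (2 * (Real.pi : ℂ) * Complex.I * (h : ℂ) * (((p : ℕ) : ℂ) ^ (k + 1)) / (q : ℂ))
    / (((k : ℂ) + 1) * ((p : ℕ) : ℂ) ^ (s * ((k : ℂ) + 1)))

private noncomputable def FTf (h : ℤ) (q : ℕ) (s : ℂ) (p : Nat.Primes) (k : ℕ) : ℂ :=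
  (Complex.exp (2 * (Real.pi : ℂ) * Complex.I * ((p : ℕ) : ℂ) * (h : ℂ) * ((k : ℂ) + 2) / (q : ℂ))
    - Complex.exp (2 * (Real.pi : ℂ) * Complex.I * (((p : ℕ) : ℂ) ^ (k + 2)) * (h : ℂ) / (q : ℂ)))
    / (((k : ℂ) + 2) * ((p : ℕ) : ℂ) ^ (s * ((k : ℂ) + 2)))

private noncomputable def FcharF {q : ℕ} (χ : DirichletCharacter ℂ q) (s : ℂ)
    (p : Nat.Primes) (k : ℕ) : ℂ :=
  χ (((p : ℕ) : ZMod q)) ^ (k + 1) / (((k : ℂ) + 1) * ((p : ℕ) : ℂ) ^ (s * ((k : ℂ) + 1)))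

private noncomputable def FzetaF (s : ℂ) (p : Nat.Primes) (k : ℕ) : ℂ :=
  1 / (((k : ℂ) + 1) * ((p : ℕ) : ℂ) ^ (s * ((k : ℂ) + 1)))

private lemma plogPsi_eq (h : ℤ) (q : ℕ) (s : ℂ) :
    plogPsi h q s = ∑' (p : Nat.Primes), ∑' (k : ℕ), Fpsi h q s p k := rfl

private lemma Thq_eq (h : ℤ) (q : ℕ) (s : ℂ) :
    Thq h q s = ∑' (p : Nat.Primes), ∑' (k : ℕ), FTf h q s p k := rfl

private lemma plogChar_eq {q : ℕ} (χ : DirichletCharacter ℂ q) (s : ℂ) :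
    plogChar χ s = ∑' (p : Nat.Primes), ∑' (k : ℕ), FcharF χ s p k := rfl

private lemma plogZeta_eq (s : ℂ) :
    plogZeta s = ∑' (p : Nat.Primes), ∑' (k : ℕ), FzetaF s p k := rfl

private lemma alt_eq_charsum {h : ℤ} {q : ℕ} (hq : 2 < q) (hcop : IsCoprime h (q:ℤ))
    {x : Nat.Primes} (hx : ¬ (x:ℕ) ∣ q) (m : ℕ) :
    Complex.exp (2*(Real.pi:ℂ)*Complex.I*(h:ℂ)*(((x:ℕ):ℂ)^m)/(q:ℂ))
      = ((q.totient : ℕ):ℂ)⁻¹ * ∑ χ : DirichletCharacter ℂ q,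
          gaussS χ * ((starRingEnd ℂ) (χ ((h : ZMod q)))) * ((conjChar χ) (((x:ℕ) : ZMod q)))^m := by
  haveI : NeZero q := ⟨by omega⟩
  have hφ0 : ((q.totient : ℕ):ℂ) ≠ 0 :=
    Nat.cast_ne_zero.mpr (Nat.totient_pos.mpr (by omega)).ne'
  have hunit_h := isUnit_int_cast (q := q) hcop
  have hunit_x : IsUnit (((x:ℕ):ZMod q)) := by
    rw [ZMod.isUnit_iff_coprime]
    exact (Nat.Prime.coprime_iff_not_dvd x.2).mpr hx
  have hunit_a : IsUnit ((h:ZMod q) * ((x:ℕ):ZMod q)^m) := hunit_h.mul (hunit_x.pow m)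
  have hZa : ((h * ((x:ℕ):ℤ)^m : ℤ) : ZMod q) = (h:ZMod q) * ((x:ℕ):ZMod q)^m := by
    push_cast; ring
  have horth := gauss_orth (q := q) hunit_a
  have hsplit : ∀ χ : DirichletCharacter ℂ q,
      gaussS χ * (starRingEnd ℂ) (χ ((h:ZMod q) * ((x:ℕ):ZMod q)^m))
        = gaussS χ * (starRingEnd ℂ) (χ ((h : ZMod q)))
            * ((conjChar χ) (((x:ℕ) : ZMod q)))^m := by
    intro χ
    simp only [map_mul, map_pow]
    simp only [conjChar, MulChar.ringHomComp_apply]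
    ring
  have hmain : ((q.totient : ℕ):ℂ)
        * Complex.exp (2*(Real.pi:ℂ)*Complex.I*(h:ℂ)*(((x:ℕ):ℂ)^m)/(q:ℂ))
      = ∑ χ : DirichletCharacter ℂ q, gaussS χ * (starRingEnd ℂ) (χ ((h : ZMod q)))
          * ((conjChar χ) (((x:ℕ) : ZMod q)))^m := by
    rw [show Complex.exp (2*(Real.pi:ℂ)*Complex.I*(h:ℂ)*(((x:ℕ):ℂ)^m)/(q:ℂ))
        = Complex.exp (2*(Real.pi:ℂ)*Complex.I*((h * ((x:ℕ):ℤ)^m : ℤ):ℂ)/(q:ℂ)) by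
      congr 1; push_cast; ring]
    rw [exp_periodic (show q ≠ 0 by omega), hZa, ← horth]
    exact Finset.sum_congr rfl fun χ _ => hsplit χ
  rw [← hmain, inv_mul_cancel_left₀ hφ0]

end Families


private lemma chi_split {q : ℕ} (F : DirichletCharacter ℂ q → ℂ) :
    ∑ χ : DirichletCharacter ℂ q, F χ
      = F 1 + ∑ χ ∈ Finset.univ.filter fun χ : DirichletCharacter ℂ q => χ ≠ 1, F χ := by
  rw [Finset.filter_ne']
  exact (Finset.add_sum_erase _ F (Finset.mem_univ 1)).symm

theorem stmt9 (h : ℤ) (q : ℕ) (hq : 2 < q) (hcop : IsCoprime h (q : ℤ))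
    (s : ℂ) (hs : 1 < s.re) :
    plogPsi h q s
      = (1 / (Nat.totient q : ℂ))
          * (∑ χ ∈ Finset.univ.filter fun χ : DirichletCharacter ℂ q => χ ≠ 1,
              gaussS χ * (starRingEnd ℂ) (χ ((h : ZMod q))) * plogChar (conjChar χ) s)
        + ((ArithmeticFunction.moebius q : ℂ) / (Nat.totient q : ℂ)) * plogZeta s
        - ((ArithmeticFunction.moebius q : ℂ) / (Nat.totient q : ℂ))
            * ∑ p ∈ q.primeFactors, ∑' k : ℕ,
                1 / (((k : ℂ) + 1) * (p : ℂ) ^ (s * ((k : ℂ) + 1)))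
        + (∑ p ∈ q.primeFactors, ∑' k : ℕ,
            Complex.exp (2 * (Real.pi : ℂ) * Complex.I * (h : ℂ) * ((p : ℂ) ^ (k + 1)) / (q : ℂ))
              / (((k : ℂ) + 1) * (p : ℂ) ^ (s * ((k : ℂ) + 1))))
        + Thq h q s := by
  classical
  haveI : NeZero q := ⟨by omega⟩
  have hq0 : q ≠ 0 := by omega
  have hφ0 : ((q.totient : ℕ):ℂ) ≠ 0 :=
    Nat.cast_ne_zero.mpr (Nat.totient_pos.mpr (by omega)).ne'
  have hunit_h := isUnit_int_cast (q := q) hcop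
  -- norm bounds
  have hbψ : ∀ (p : Nat.Primes) (k : ℕ),
      ‖Fpsi h q s p k‖ ≤ 1 * (((p:ℕ):ℝ) ^ (-s.re)) ^ (k+1) := by
    intro p k
    unfold Fpsi
    refine term_norm_le hs (p:ℕ) p.2.two_le k _ ?_
    exact le_of_eq (norm_exp_I_real _ (2*Real.pi*((p:ℕ):ℝ)*(h:ℝ)*((k:ℝ)+1)/(q:ℝ))
      (by push_cast; ring))
  have hbalt : ∀ (p : Nat.Primes) (k : ℕ),
      ‖FaltF h q s p k‖ ≤ 1 * (((p:ℕ):ℝ) ^ (-s.re)) ^ (k+1) := by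
    intro p k
    unfold FaltF
    refine term_norm_le hs (p:ℕ) p.2.two_le k _ ?_
    exact le_of_eq (norm_exp_I_real _ (2*Real.pi*(h:ℝ)*(((p:ℕ):ℝ)^(k+1))/(q:ℝ))
      (by push_cast; ring))
  have hbzeta : ∀ (p : Nat.Primes) (k : ℕ),
      ‖FzetaF s p k‖ ≤ 1 * (((p:ℕ):ℝ) ^ (-s.re)) ^ (k+1) := by
    intro p k
    unfold FzetaF
    exact term_norm_le hs (p:ℕ) p.2.two_le k _ (le_of_eq norm_one)
  have hbchar : ∀ (χ' : DirichletCharacter ℂ q) (p : Nat.Primes) (k : ℕ),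
      ‖FcharF χ' s p k‖ ≤ 1 * (((p:ℕ):ℝ) ^ (-s.re)) ^ (k+1) := by
    intro χ' p k
    unfold FcharF
    refine term_norm_le hs (p:ℕ) p.2.two_le k _ ?_
    rw [norm_pow]
    exact pow_le_one₀ (norm_nonneg _) (χ'.norm_le_one _)
  have hbT : ∀ (p : Nat.Primes) (k : ℕ),
      ‖FTf h q s p k‖ ≤ 2 * (((p:ℕ):ℝ) ^ (-s.re)) ^ (k+1) := by
    intro p k
    have hb2 : ‖Complex.exp (2 * (Real.pi : ℂ) * Complex.I * ((p : ℕ) : ℂ) * (h : ℂ)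
          * ((k : ℂ) + 2) / (q : ℂ))
        - Complex.exp (2 * (Real.pi : ℂ) * Complex.I * (((p : ℕ) : ℂ) ^ (k + 2)) * (h : ℂ)
          / (q : ℂ))‖ ≤ 2 := by
      refine le_trans (norm_sub_le _ _) ?_
      rw [norm_exp_I_real _ (2*Real.pi*((p:ℕ):ℝ)*(h:ℝ)*((k:ℝ)+2)/(q:ℝ)) (by push_cast; ring),
        norm_exp_I_real _ (2*Real.pi*(((p:ℕ):ℝ)^(k+2))*(h:ℝ)/(q:ℝ)) (by push_cast; ring)]
      norm_num
    have hmain := term_norm_le (s := s) hs (p:ℕ) p.2.two_le (k+1) _ hb2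
    rw [show (((k+1:ℕ):ℂ)+1) = ((k:ℂ)+2) by push_cast; ring] at hmain
    refine le_trans hmain ?_
    refine mul_le_mul_of_nonneg_left ?_ (by norm_num)
    exact pow_le_pow_of_le_one (rP_pos (σ := s.re) p).le (rP_lt_one hs p).le (by omega)
  -- summability
  have innψ : ∀ p, Summable (Fpsi h q s p) :=
    fun p => summable_geom_bound (rP_pos p).le (rP_lt_one hs p) (hbψ p)
  have innalt : ∀ p, Summable (FaltF h q s p) :=
    fun p => summable_geom_bound (rP_pos p).le (rP_lt_one hs p) (hbalt p)
  have innchar : ∀ (χ' : DirichletCharacter ℂ q) p, Summable (FcharF χ' s p) :=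
    fun χ' p => summable_geom_bound (rP_pos p).le (rP_lt_one hs p) (hbchar χ' p)
  have Salto : Summable (fun p : Nat.Primes => ∑' k, FaltF h q s p k) :=
    summable_outer hs zero_le_one hbalt
  have STo : Summable (fun p : Nat.Primes => ∑' k, FTf h q s p k) :=
    summable_outer hs (by norm_num) hbT
  have Szetao : Summable (fun p : Nat.Primes => ∑' k, FzetaF s p k) :=
    summable_outer hs zero_le_one hbzeta
  have Scharo : ∀ χ' : DirichletCharacter ℂ q,
      Summable (fun p : Nat.Primes => ∑' k, FcharF χ' s p k) :=
    fun χ' => summable_outer hs zero_le_one (hbchar χ')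
  -- Step A : plogPsi = alt + Thq
  have hstepA : plogPsi h q s = (∑' (p : Nat.Primes), ∑' k, FaltF h q s p k) + Thq h q s := by
    have hps : ∀ p : Nat.Primes,
        ∑' k, Fpsi h q s p k = (∑' k, FaltF h q s p k) + ∑' k, FTf h q s p k := by
      intro p
      have hsub : Summable (fun k => Fpsi h q s p k - FaltF h q s p k) :=
        (innψ p).sub (innalt p)
      have h0 : Fpsi h q s p 0 - FaltF h q s p 0 = 0 := by
        unfold Fpsi FaltF
        rw [sub_eq_zero]
        congr 2
        push_cast
        ring
      have hshift : ∀ k : ℕ, Fpsi h q s p (k+1) - FaltF h q s p (k+1) = FTf h q s p k := by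
        intro k
        have e3 : (((k+1 : ℕ)):ℂ) + 1 = (k:ℂ)+2 := by push_cast; ring
        have e1 : 2*(Real.pi:ℂ)*Complex.I*((p:ℕ):ℂ)*(h:ℂ)*((((k+1:ℕ)):ℂ)+1)/(q:ℂ)
            = 2*(Real.pi:ℂ)*Complex.I*((p:ℕ):ℂ)*(h:ℂ)*((k:ℂ)+2)/(q:ℂ) := by rw [e3]
        have e2 : 2*(Real.pi:ℂ)*Complex.I*(h:ℂ)*(((p:ℕ):ℂ)^((k+1)+1))/(q:ℂ)
            = 2*(Real.pi:ℂ)*Complex.I*(((p:ℕ):ℂ)^(k+2))*(h:ℂ)/(q:ℂ) := by ring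
        unfold Fpsi FaltF FTf
        rw [div_sub_div_same, e1, e2, e3]
      calc ∑' k, Fpsi h q s p k
          = ∑' k, (FaltF h q s p k + (Fpsi h q s p k - FaltF h q s p k)) :=
            tsum_congr fun k => by ring
        _ = (∑' k, FaltF h q s p k) + ∑' k, (Fpsi h q s p k - FaltF h q s p k) :=
            Summable.tsum_add (innalt p) hsub
        _ = (∑' k, FaltF h q s p k) + ((Fpsi h q s p 0 - FaltF h q s p 0)
              + ∑' k, (Fpsi h q s p (k+1) - FaltF h q s p (k+1))) := by
            rw [← Summable.tsum_eq_zero_add hsub]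
        _ = (∑' k, FaltF h q s p k) + ∑' k, FTf h q s p k := by
            rw [h0, zero_add]
            exact congrArg _ (tsum_congr hshift)
    rw [plogPsi_eq, tsum_congr hps, Summable.tsum_add Salto STo, Thq_eq]
  -- the complement set
  set C : Set Nat.Primes := (↑(Pfin q) : Set Nat.Primes)ᶜ with hCdef
  have hCmem : ∀ x : Nat.Primes, x ∈ C → ¬ (x:ℕ) ∣ q := by
    intro x hx
    rw [hCdef, compl_Pfin hq0] at hx
    exact hx
  -- Step B : split alt sum
  have hsplit_alt : (∑' (p : Nat.Primes), ∑' k, FaltF h q s p k)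
      = (∑ x ∈ Pfin q, ∑' k, FaltF h q s x k) + ∑' (x : C), ∑' k, FaltF h q s (↑x) k := by
    have h2 := Summable.sum_add_tsum_compl (s := Pfin q) Salto
    rw [← hCdef] at h2
    exact h2.symm
  -- Step C : character expansion on the complement
  have hCpt : ∀ (x : Nat.Primes), ¬ (x:ℕ) ∣ q → ∑' k, FaltF h q s x k
      = ∑ χ : DirichletCharacter ℂ q,
          (((q.totient:ℕ):ℂ)⁻¹ * (gaussS χ * (starRingEnd ℂ) (χ ((h : ZMod q)))))
            * ∑' k, FcharF (conjChar χ) s x k := by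
    intro x hx
    have h1 : ∀ k : ℕ, FaltF h q s x k = ∑ χ : DirichletCharacter ℂ q,
        (((q.totient:ℕ):ℂ)⁻¹ * (gaussS χ * (starRingEnd ℂ) (χ ((h : ZMod q)))))
          * FcharF (conjChar χ) s x k := by
      intro k
      unfold FaltF FcharF
      rw [alt_eq_charsum hq hcop hx (k+1), mul_div_assoc, Finset.sum_div, Finset.mul_sum]
      exact Finset.sum_congr rfl fun χ _ => by ring
    rw [tsum_congr h1, Summable.tsum_finsetSum (fun χ _ => (innchar (conjChar χ) x).mul_left _)]
    exact Finset.sum_congr rfl fun χ _ => tsum_mul_left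
  have hCtsum : ∑' (x : C), ∑' k, FaltF h q s (↑x) k
      = ∑ χ : DirichletCharacter ℂ q,
          (((q.totient:ℕ):ℂ)⁻¹ * (gaussS χ * (starRingEnd ℂ) (χ ((h : ZMod q)))))
            * ∑' (x : C), ∑' k, FcharF (conjChar χ) s (↑x) k := by
    rw [tsum_congr (fun x : C => hCpt (↑x) (hCmem (↑x) x.2))]
    exact (Summable.tsum_finsetSum (fun χ _ => ((Scharo (conjChar χ)).subtype C).mul_left _)).trans
      (Finset.sum_congr rfl fun χ _ => tsum_mul_left)
  -- Step D : complement char sums are plogChar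
  have hcharP0 : ∀ (χ' : DirichletCharacter ℂ q), ∀ x ∈ Pfin q,
      (∑' k, FcharF χ' s x k) = 0 := by
    intro χ' x hx
    have hnu : ¬ IsUnit (((x:ℕ):ZMod q)) :=
      ZMod.not_isUnit_of_mem_primeFactors (mem_Pfin.mp hx)
    have : ∀ k : ℕ, FcharF χ' s x k = 0 := by
      intro k
      unfold FcharF
      rw [MulChar.map_nonunit _ hnu, zero_pow (Nat.succ_ne_zero k), zero_div]
    simp [this]
  have hcharC : ∀ χ' : DirichletCharacter ℂ q,
      ∑' (x : C), ∑' k, FcharF χ' s (↑x) k = plogChar χ' s := by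
    intro χ'
    have h2 := Summable.sum_add_tsum_compl (s := Pfin q) (Scharo χ')
    rw [← hCdef, Finset.sum_eq_zero (hcharP0 χ'), zero_add] at h2
    rw [plogChar_eq, ← h2]
  -- Step E : the trivial character gives zeta
  have hone : ∑' (x : C), ∑' k, FcharF (conjChar (1 : DirichletCharacter ℂ q)) s (↑x) k
      = plogZeta s - ∑ p ∈ q.primeFactors, ∑' k : ℕ,
          1 / (((k : ℂ) + 1) * (p : ℂ) ^ (s * ((k : ℂ) + 1))) := by
    have hpt : ∀ (x : C) (k : ℕ),
        FcharF (conjChar (1 : DirichletCharacter ℂ q)) s (↑x) k = FzetaF s (↑x) k := by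
      intro x k
      unfold FcharF FzetaF
      have hu : IsUnit ((((x : Nat.Primes) : ℕ):ZMod q)) := by
        rw [ZMod.isUnit_iff_coprime]
        exact (Nat.Prime.coprime_iff_not_dvd (x : Nat.Primes).2).mpr (hCmem _ x.2)
      rw [show (conjChar (1 : DirichletCharacter ℂ q)) ((((x : Nat.Primes) : ℕ):ZMod q)) = 1 by
        simp [conjChar, MulChar.ringHomComp_apply, MulChar.one_apply hu], one_pow]
    rw [tsum_congr (fun x => tsum_congr (hpt x))]
    have h2 := Summable.sum_add_tsum_compl (s := Pfin q) Szetao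
    rw [← hCdef] at h2
    have hPz : ∑ x ∈ Pfin q, ∑' k, FzetaF s x k
        = ∑ p ∈ q.primeFactors, ∑' k : ℕ,
            1 / (((k : ℂ) + 1) * (p : ℂ) ^ (s * ((k : ℂ) + 1))) :=
      sum_Pfin _ _ (fun x => rfl)
    rw [plogZeta_eq, ← h2, hPz]
    ring
  -- Step F : assemble
  have hAltP : ∑ x ∈ Pfin q, ∑' k, FaltF h q s x k
      = ∑ p ∈ q.primeFactors, ∑' k : ℕ,
          Complex.exp (2 * (Real.pi : ℂ) * Complex.I * (h : ℂ) * ((p : ℂ) ^ (k + 1)) / (q : ℂ))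
            / (((k : ℂ) + 1) * (p : ℂ) ^ (s * ((k : ℂ) + 1))) :=
    sum_Pfin _ _ (fun x => rfl)
  rw [hstepA, hsplit_alt, hCtsum, hAltP, chi_split]
  rw [hone, gaussS_one hq0, MulChar.one_apply hunit_h, map_one]
  simp only [hcharC]
  have hμ : (ArithmeticFunction.moebius q : ℂ) = ((ArithmeticFunction.moebius q : ℤ) : ℂ) := by
    norm_cast
  have hφ : (Nat.totient q : ℂ) = ((q.totient : ℕ):ℂ) := rfl
  simp only [mul_assoc]
  rw [← Finset.mul_sum]
  rw [hμ, hφ]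
  ring
end
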